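/- arXiv:1210.3932 — 5 statements merged into one kernel-verified Lean document; each statement's English description precedes it below -/
import Mathlib

section
/- For a càdlàg function f : [a,b] → ℝ and c > 0, the total variation of the function f^{0,c}(s) = UTV^c(f,[a,s]) − DTV^c(f,[a,s]) on [a,s] equals TV^c(f,[a,s]) for every s ∈ (a,b]; in particular the decomposition f^{0,c} = UTV^c − DTV^c is a minimal (Jordan) decomposition. -/
open Set Filter

/-- A finite partition `t 0 < t 1 < ... < t n` of points in `[a, b]`. -/
def IsPart (a b : ℝ) (n : ℕ) (t : ℕ → ℝ) : Prop :=
  a ≤ t 0 ∧ t n ≤ b ∧ ∀ i < n, t i < t (i + 1)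

/-- Total variation of `f` on `[a, b]`. -/
noncomputable def TVar {E : Type*} [PseudoMetricSpace E] (f : ℝ → E) (a b : ℝ) : ENNReal :=
  ⨆ (n : ℕ) (t : ℕ → ℝ) (_ : IsPart a b n t),
    ∑ i ∈ Finset.range n, ENNReal.ofReal (dist (f (t (i + 1))) (f (t i)))

/-- Truncated variation of `f` at level `c` on `[a, b]`. -/
noncomputable def TVc {E : Type*} [PseudoMetricSpace E] (f : ℝ → E) (c a b : ℝ) : ENNReal :=
  ⨆ (n : ℕ) (t : ℕ → ℝ) (_ : IsPart a b n t),
    ∑ i ∈ Finset.range n, ENNReal.ofReal (dist (f (t (i + 1))) (f (t i)) - c)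

/-- Upward truncated variation. -/
noncomputable def UTVc (f : ℝ → ℝ) (c a b : ℝ) : ENNReal :=
  ⨆ (n : ℕ) (t : ℕ → ℝ) (_ : IsPart a b n t),
    ∑ i ∈ Finset.range n, ENNReal.ofReal (f (t (i + 1)) - f (t i) - c)

/-- Downward truncated variation. -/
noncomputable def DTVc (f : ℝ → ℝ) (c a b : ℝ) : ENNReal :=
  ⨆ (n : ℕ) (t : ℕ → ℝ) (_ : IsPart a b n t),
    ∑ i ∈ Finset.range n, ENNReal.ofReal (f (t i) - f (t (i + 1)) - c)

/-- `f` is càdlàg on `[a, b]`: right-continuous on `[a, b)`, with left limits on `(a, b]`. -/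
def Cadlag {E : Type*} [TopologicalSpace E] (f : ℝ → E) (a b : ℝ) : Prop :=
  (∀ t ∈ Set.Ico a b, Tendsto f (nhdsWithin t (Set.Ioi t)) (nhds (f t))) ∧
  (∀ t ∈ Set.Ioc a b, ∃ l, Tendsto f (nhdsWithin t (Set.Iio t)) (nhds l))

namespace TVAux

noncomputable def partSum (g : ℝ → ℝ → ℝ) (n : ℕ) (t : ℕ → ℝ) : ENNReal :=
  ∑ i ∈ Finset.range n, ENNReal.ofReal (g (t i) (t (i + 1)))

noncomputable def pVar (g : ℝ → ℝ → ℝ) (a b : ℝ) : ENNReal :=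
  ⨆ (n : ℕ) (t : ℕ → ℝ) (_ : IsPart a b n t), partSum g n t

lemma TVar_eq_pVar (f : ℝ → ℝ) (a b : ℝ) :
    TVar f a b = pVar (fun x y => dist (f y) (f x)) a b := rfl

lemma TVc_eq_pVar (f : ℝ → ℝ) (c a b : ℝ) :
    TVc f c a b = pVar (fun x y => dist (f y) (f x) - c) a b := rfl

lemma UTVc_eq_pVar (f : ℝ → ℝ) (c a b : ℝ) :
    UTVc f c a b = pVar (fun x y => f y - f x - c) a b := rfl

lemma DTVc_eq_pVar (f : ℝ → ℝ) (c a b : ℝ) :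
    DTVc f c a b = pVar (fun x y => f x - f y - c) a b := rfl

lemma le_pVar {g : ℝ → ℝ → ℝ} {a b : ℝ} {n : ℕ} {t : ℕ → ℝ} (h : IsPart a b n t) :
    partSum g n t ≤ pVar g a b :=
  le_iSup_of_le n (le_iSup_of_le t (le_iSup_of_le h le_rfl))

lemma chain_le {g : ℕ → ℝ} {n : ℕ} (h : ∀ i < n, g i < g (i + 1)) :
    ∀ {i j : ℕ}, i ≤ j → j ≤ n → g i ≤ g j := by
  intro i j hij hjn
  induction j with
  | zero => simp [Nat.le_zero.mp hij]
  | succ j ih =>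
    rcases Nat.eq_or_lt_of_le hij with rfl | hlt
    · exact le_rfl
    · exact le_trans (ih (by omega) (by omega)) (h j (by omega)).le

lemma part_le {a b : ℝ} {n : ℕ} {t : ℕ → ℝ} (h : IsPart a b n t) {i j : ℕ}
    (hij : i ≤ j) (hjn : j ≤ n) : t i ≤ t j :=
  chain_le h.2.2 hij hjn

lemma part_mem {a b : ℝ} {n : ℕ} {t : ℕ → ℝ} (h : IsPart a b n t) {i : ℕ} (hi : i ≤ n) :
    t i ∈ Set.Icc a b :=
  ⟨le_trans h.1 (part_le h (Nat.zero_le i) hi), le_trans (part_le h hi le_rfl) h.2.1⟩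

lemma pVar_mono_right {g : ℝ → ℝ → ℝ} {a b b' : ℝ} (h : b ≤ b') :
    pVar g a b ≤ pVar g a b' := by
  refine iSup_le fun n => iSup_le fun t => iSup_le fun hp => le_pVar ?_
  exact ⟨hp.1, le_trans hp.2.1 h, hp.2.2⟩

lemma pVar_mono_left {g : ℝ → ℝ → ℝ} {a a' b : ℝ} (h : a' ≤ a) :
    pVar g a b ≤ pVar g a' b := by
  refine iSup_le fun n => iSup_le fun t => iSup_le fun hp => le_pVar ?_
  exact ⟨le_trans h hp.1, hp.2.1, hp.2.2⟩

lemma pVar_mono_fun {g₁ g₂ : ℝ → ℝ → ℝ} {a b : ℝ} (h : ∀ x y, g₁ x y ≤ g₂ x y) :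
    pVar g₁ a b ≤ pVar g₂ a b := by
  refine iSup_le fun n => iSup_le fun t => iSup_le fun hp => le_trans ?_ (le_pVar hp)
  exact Finset.sum_le_sum fun i _ => ENNReal.ofReal_le_ofReal (h _ _)

lemma pVar_eq {g : ℝ → ℝ → ℝ} {a b : ℝ} :
    pVar g a b = ⨆ P : {x : ℕ × (ℕ → ℝ) // IsPart a b x.1 x.2}, partSum g P.1.1 P.1.2 := by
  apply le_antisymm
  · exact iSup_le fun n => iSup_le fun t => iSup_le fun hp => le_iSup_of_le ⟨(n, t), hp⟩ le_rfl
  · exact iSup_le fun P => le_pVar P.2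

lemma part_nonempty {a b : ℝ} (hab : a ≤ b) :
    Nonempty {x : ℕ × (ℕ → ℝ) // IsPart a b x.1 x.2} :=
  ⟨⟨(0, fun _ => a), ⟨le_rfl, hab, fun i hi => absurd hi (by omega)⟩⟩⟩

lemma pVar_add_le {g : ℝ → ℝ → ℝ} {a b : ℝ} (hab : a ≤ b) {k X : ENNReal}
    (h : ∀ n t, IsPart a b n t → partSum g n t + k ≤ X) : pVar g a b + k ≤ X := by
  haveI := part_nonempty (a := a) (b := b) hab
  rw [pVar_eq, ENNReal.iSup_add]
  exact iSup_le fun P => h _ _ P.2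


def ext1 (t : ℕ → ℝ) (n : ℕ) (q : ℝ) : ℕ → ℝ := fun i => if i ≤ n then t i else q

lemma ext1_le {t : ℕ → ℝ} {n : ℕ} {q : ℝ} {i : ℕ} (h : i ≤ n) : ext1 t n q i = t i := if_pos h

lemma ext1_gt {t : ℕ → ℝ} {n : ℕ} {q : ℝ} {i : ℕ} (h : n < i) : ext1 t n q i = q :=
  if_neg (by omega)

def cons1 (x : ℝ) (t : ℕ → ℝ) : ℕ → ℝ := fun i => match i with
  | 0 => x
  | k + 1 => t k

@[simp] lemma cons1_zero (x : ℝ) (t : ℕ → ℝ) : cons1 x t 0 = x := rfl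
@[simp] lemma cons1_succ (x : ℝ) (t : ℕ → ℝ) (k : ℕ) : cons1 x t (k + 1) = t k := rfl

lemma partSum_cons1 (g : ℝ → ℝ → ℝ) (x : ℝ) (t : ℕ → ℝ) (n : ℕ) :
    partSum g (n + 1) (cons1 x t) = partSum g n t + ENNReal.ofReal (g x (t 0)) := by
  rw [partSum, Finset.sum_range_succ', partSum]
  rfl

lemma partSum_ext1 (g : ℝ → ℝ → ℝ) (t : ℕ → ℝ) (n : ℕ) (q : ℝ) :
    partSum g (n + 1) (ext1 t n q) = partSum g n t + ENNReal.ofReal (g (t n) q) := by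
  rw [partSum, Finset.sum_range_succ, partSum]
  congr 1
  · refine Finset.sum_congr rfl fun i hi => ?_
    have hi' : i < n := Finset.mem_range.mp hi
    rw [ext1_le (by omega), ext1_le (by omega)]
  · rw [ext1_le le_rfl, ext1_gt (by omega)]

lemma isPart_ext1 {a b p q : ℝ} {n : ℕ} {t : ℕ → ℝ} (hpt : IsPart a p n t)
    (htn : t n < q) (hqb : q ≤ b) : IsPart a b (n + 1) (ext1 t n q) := by
  refine ⟨by rw [ext1_le (Nat.zero_le n)]; exact hpt.1, by rw [ext1_gt (by omega)]; exact hqb, ?_⟩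
  intro i hi
  rcases Nat.lt_or_ge i n with h1 | h1
  · rw [ext1_le (by omega), ext1_le (by omega)]
    exact hpt.2.2 i h1
  · have h2 : i = n := by omega
    rw [h2, ext1_le le_rfl, ext1_gt (by omega)]
    exact htn

lemma isPart_cons1 {a b x : ℝ} {n : ℕ} {t : ℕ → ℝ} (hpt : IsPart (t 0) b n t)
    (hax : a ≤ x) (hxt : x < t 0) : IsPart a b (n + 1) (cons1 x t) := by
  refine ⟨by simpa using hax, by simpa using hpt.2.1, ?_⟩
  intro i hi
  match i with
  | 0 => simpa using hxt
  | k + 1 =>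
    simp only [cons1_succ]
    exact hpt.2.2 k (by omega)

lemma pVar_append {g : ℝ → ℝ → ℝ} {a b p q : ℝ} (hap : a ≤ p) (hpq : p < q) (hqb : q ≤ b) :
    pVar g a p + ENNReal.ofReal (g p q) ≤ pVar g a b := by
  refine pVar_add_le hap ?_
  intro n t hpt
  rcases eq_or_lt_of_le hpt.2.1 with heq | hlt
  · -- t n = p
    have hp' : IsPart a b (n + 1) (ext1 t n q) := isPart_ext1 hpt (by rw [heq]; exact hpq) hqb
    have := le_pVar (g := g) hp'
    rw [partSum_ext1, heq] at this
    exact this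
  · -- t n < p : add both p and q
    have hp1 : IsPart a q (n + 1) (ext1 t n p) := isPart_ext1 hpt hlt hpq.le
    have hp2 : IsPart a b (n + 2) (ext1 (ext1 t n p) (n + 1) q) :=
      isPart_ext1 hp1 (by rw [ext1_gt (by omega)]; exact hpq) hqb
    have := le_pVar (g := g) hp2
    rw [partSum_ext1, partSum_ext1, ext1_gt (by omega)] at this
    calc partSum g n t + ENNReal.ofReal (g p q)
        ≤ partSum g n t + ENNReal.ofReal (g (t n) p) + ENNReal.ofReal (g p q) := by
          gcongr; exact le_add_right le_rfl
      _ ≤ pVar g a b := this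
  
lemma pVar_prepend {g : ℝ → ℝ → ℝ} {a b x y : ℝ} (hax : a ≤ x) (hxy : x < y) (hyb : y ≤ b) :
    ENNReal.ofReal (g x y) + pVar g y b ≤ pVar g a b := by
  rw [add_comm]
  refine pVar_add_le hyb ?_
  intro n t hpt
  rcases eq_or_lt_of_le hpt.1 with heq | hlt
  · -- y = t 0
    have hp' : IsPart a b (n + 1) (cons1 x t) :=
      isPart_cons1 ⟨le_rfl, hpt.2.1, hpt.2.2⟩ hax (heq ▸ hxy)
    have := le_pVar (g := g) hp'
    rw [partSum_cons1, ← heq] at this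
    exact this
  · -- y < t 0
    have hp1 : IsPart y b (n + 1) (cons1 y t) :=
      isPart_cons1 ⟨le_rfl, hpt.2.1, hpt.2.2⟩ le_rfl hlt
    have hp2 : IsPart a b (n + 2) (cons1 x (cons1 y t)) := by
      refine isPart_cons1 ?_ hax (by simpa using hxy)
      simpa using hp1
    have := le_pVar (g := g) hp2
    rw [partSum_cons1, partSum_cons1] at this
    simp only [cons1_zero] at this
    calc partSum g n t + ENNReal.ofReal (g x y)
        ≤ partSum g n t + ENNReal.ofReal (g y (t 0)) + ENNReal.ofReal (g x y) := by
          gcongr; exact le_add_right le_rfl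
      _ ≤ pVar g a b := this
/-! ### Pair systems -/

def Sys (a b : ℝ) (n : ℕ) (u v : ℕ → ℝ) : Prop :=
  (∀ i < n, a ≤ u i ∧ u i < v i ∧ v i ≤ b) ∧ ∀ i, i + 1 < n → v i ≤ u (i + 1)

noncomputable def rawU (f : ℝ → ℝ) (c : ℝ) (n : ℕ) (u v : ℕ → ℝ) : ℝ :=
  ∑ i ∈ Finset.range n, (f (v i) - f (u i) - c)

noncomputable def rawD (f : ℝ → ℝ) (c : ℝ) (n : ℕ) (u v : ℕ → ℝ) : ℝ :=
  ∑ i ∈ Finset.range n, (f (u i) - f (v i) - c)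

def negF (f : ℝ → ℝ) : ℝ → ℝ := fun x => -f x

lemma rawU_negF (f : ℝ → ℝ) (c : ℝ) (n : ℕ) (u v : ℕ → ℝ) :
    rawU (negF f) c n u v = rawD f c n u v := by
  refine Finset.sum_congr rfl fun i _ => ?_
  simp only [negF]
  ring

lemma rawD_negF (f : ℝ → ℝ) (c : ℝ) (n : ℕ) (u v : ℕ → ℝ) :
    rawD (negF f) c n u v = rawU f c n u v := by
  refine Finset.sum_congr rfl fun i _ => ?_
  simp only [negF]
  ring

lemma sys_zero (a b : ℝ) (u v : ℕ → ℝ) : Sys a b 0 u v :=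
  ⟨fun i hi => absurd hi (by omega), fun i hi => absurd hi (by omega)⟩

lemma rawU_zero (f : ℝ → ℝ) (c : ℝ) (u v : ℕ → ℝ) : rawU f c 0 u v = 0 := by
  simp [rawU]

lemma rawD_zero (f : ℝ → ℝ) (c : ℝ) (u v : ℕ → ℝ) : rawD f c 0 u v = 0 := by
  simp [rawD]

lemma rawU_succ (f : ℝ → ℝ) (c : ℝ) (n : ℕ) (u v : ℕ → ℝ) :
    rawU f c (n + 1) u v = rawU f c n u v + (f (v n) - f (u n) - c) :=
  Finset.sum_range_succ _ n

lemma rawD_succ (f : ℝ → ℝ) (c : ℝ) (n : ℕ) (u v : ℕ → ℝ) :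
    rawD f c (n + 1) u v = rawD f c n u v + (f (u n) - f (v n) - c) :=
  Finset.sum_range_succ _ n

lemma rawU_succ' (f : ℝ → ℝ) (c : ℝ) (n : ℕ) (u v : ℕ → ℝ) :
    rawU f c (n + 1) u v
      = (f (v 0) - f (u 0) - c) + rawU f c n (fun i => u (i + 1)) (fun i => v (i + 1)) := by
  rw [rawU, Finset.sum_range_succ', add_comm]
  rfl

lemma rawD_succ' (f : ℝ → ℝ) (c : ℝ) (n : ℕ) (u v : ℕ → ℝ) :
    rawD f c (n + 1) u v
      = (f (u 0) - f (v 0) - c) + rawD f c n (fun i => u (i + 1)) (fun i => v (i + 1)) := by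
  rw [rawD, Finset.sum_range_succ', add_comm]
  rfl

lemma sys_vu {a b : ℝ} {n : ℕ} {u v : ℕ → ℝ} (hS : Sys a b n u v) :
    ∀ {i j : ℕ}, i < j → j < n → v i ≤ u j := by
  intro i j hij hjn
  induction j with
  | zero => omega
  | succ j ih =>
    rcases Nat.lt_succ_iff_lt_or_eq.mp hij with h | rfl
    · exact le_trans (ih h (by omega)) (le_trans (hS.1 j (by omega)).2.1.le (hS.2 j hjn))
    · exact hS.2 i hjn

lemma sys_tail {a b : ℝ} {n : ℕ} {u v : ℕ → ℝ} (hS : Sys a b (n + 1) u v) :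
    Sys (v 0) b n (fun i => u (i + 1)) (fun i => v (i + 1)) := by
  constructor
  · intro i hi
    exact ⟨sys_vu hS (by omega) (by omega), (hS.1 (i + 1) (by omega)).2.1,
      (hS.1 (i + 1) (by omega)).2.2⟩
  · intro i hi
    exact hS.2 (i + 1) (by omega)

lemma sys_start {a b w : ℝ} {n : ℕ} {u v : ℕ → ℝ} (hS : Sys a b n u v) (hw : w ≤ u 0) :
    Sys w b n u v := by
  constructor
  · intro i hi
    refine ⟨?_, (hS.1 i hi).2.1, (hS.1 i hi).2.2⟩
    rcases Nat.eq_zero_or_pos i with rfl | hpos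
    · exact hw
    · exact le_trans hw (le_trans (hS.1 0 (by omega)).2.1.le (sys_vu hS hpos hi))
  · exact hS.2

lemma sys_front {a b : ℝ} {n : ℕ} {u v : ℕ → ℝ} (hS : Sys a b (n + 1) u v) :
    Sys a (u n) n u v := by
  constructor
  · intro i hi
    exact ⟨(hS.1 i (by omega)).1, (hS.1 i (by omega)).2.1, sys_vu hS (by omega) (by omega)⟩
  · intro i hi
    exact hS.2 i (by omega)

/-! ### snoc for systems -/

def snocF (g : ℕ → ℝ) (k : ℕ) (x : ℝ) : ℕ → ℝ := fun i => if i < k then g i else x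

lemma snocF_lt {g : ℕ → ℝ} {k : ℕ} {x : ℝ} {i : ℕ} (h : i < k) : snocF g k x i = g i := if_pos h

lemma snocF_ge {g : ℕ → ℝ} {k : ℕ} {x : ℝ} {i : ℕ} (h : k ≤ i) : snocF g k x i = x :=
  if_neg (by omega)

lemma rawU_snoc (f : ℝ → ℝ) (c : ℝ) (k : ℕ) (u v : ℕ → ℝ) (x y : ℝ) :
    rawU f c (k + 1) (snocF u k x) (snocF v k y) = rawU f c k u v + (f y - f x - c) := by
  rw [rawU, Finset.sum_range_succ, rawU]
  congr 1
  · refine Finset.sum_congr rfl fun i hi => ?_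
    have hi' := Finset.mem_range.mp hi
    rw [snocF_lt hi', snocF_lt hi']
  · rw [snocF_ge le_rfl, snocF_ge le_rfl]

lemma rawD_snoc (f : ℝ → ℝ) (c : ℝ) (k : ℕ) (u v : ℕ → ℝ) (x y : ℝ) :
    rawD f c (k + 1) (snocF u k x) (snocF v k y) = rawD f c k u v + (f x - f y - c) := by
  rw [rawD, Finset.sum_range_succ, rawD]
  congr 1
  · refine Finset.sum_congr rfl fun i hi => ?_
    have hi' := Finset.mem_range.mp hi
    rw [snocF_lt hi', snocF_lt hi']
  · rw [snocF_ge le_rfl, snocF_ge le_rfl]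

lemma sys_snoc {a b z x y : ℝ} {k : ℕ} {u v : ℕ → ℝ} (haz : a ≤ z) (hS : Sys a z k u v)
    (hzx : z ≤ x) (hxy : x < y) (hyb : y ≤ b) :
    Sys a b (k + 1) (snocF u k x) (snocF v k y) := by
  constructor
  · intro i hi
    rcases Nat.lt_or_ge i k with h | h
    · rw [snocF_lt h, snocF_lt h]
      exact ⟨(hS.1 i h).1, (hS.1 i h).2.1,
        le_trans (hS.1 i h).2.2 (le_trans hzx (le_trans hxy.le hyb))⟩
    · have hik : i = k := by omega
      rw [hik, snocF_ge le_rfl, snocF_ge le_rfl]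
      exact ⟨le_trans haz hzx, hxy, hyb⟩
  · intro i hi
    rcases Nat.lt_or_ge (i + 1) k with h | h
    · rw [snocF_lt (by omega), snocF_lt h]
      exact hS.2 i h
    · have hik : i < k := by omega
      rw [snocF_lt hik, snocF_ge h]
      exact le_trans (hS.1 i hik).2.2 hzx

/-! ### systems are dominated by truncated variations -/

lemma sys_le_UTVc {f : ℝ → ℝ} {c a : ℝ} {n : ℕ} {u v : ℕ → ℝ} :
    ∀ {b : ℝ}, Sys a b n u v → ENNReal.ofReal (rawU f c n u v) ≤ UTVc f c a b := by
  induction n with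
  | zero => intro b _; simp [rawU_zero]
  | succ n ih =>
    intro b hS
    have h1 : Sys a (u n) n u v := sys_front hS
    have hlast := hS.1 n (by omega)
    calc ENNReal.ofReal (rawU f c (n + 1) u v)
        ≤ ENNReal.ofReal (rawU f c n u v) + ENNReal.ofReal (f (v n) - f (u n) - c) := by
          rw [rawU_succ]; exact ENNReal.ofReal_add_le
      _ ≤ UTVc f c a (u n) + ENNReal.ofReal (f (v n) - f (u n) - c) := by gcongr; exact ih h1
      _ ≤ UTVc f c a b := by
          rw [UTVc_eq_pVar, UTVc_eq_pVar]
          exact pVar_append hlast.1 hlast.2.1 hlast.2.2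

lemma UTVc_negF (f : ℝ → ℝ) (c a b : ℝ) : UTVc (negF f) c a b = DTVc f c a b := by
  simp only [UTVc, DTVc]
  refine iSup_congr fun n => iSup_congr fun t => iSup_congr fun _ => ?_
  refine Finset.sum_congr rfl fun i _ => ?_
  congr 1
  simp only [negF]
  ring

lemma DTVc_negF (f : ℝ → ℝ) (c a b : ℝ) : DTVc (negF f) c a b = UTVc f c a b := by
  simp only [UTVc, DTVc]
  refine iSup_congr fun n => iSup_congr fun t => iSup_congr fun _ => ?_
  refine Finset.sum_congr rfl fun i _ => ?_
  congr 1
  simp only [negF]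
  ring

lemma TVc_negF (f : ℝ → ℝ) (c a b : ℝ) : TVc (negF f) c a b = TVc f c a b := by
  simp only [TVc]
  refine iSup_congr fun n => iSup_congr fun t => iSup_congr fun _ => ?_
  refine Finset.sum_congr rfl fun i _ => ?_
  congr 1
  simp only [negF, Real.dist_eq]
  rw [show -f (t (i + 1)) - -f (t i) = -(f (t (i + 1)) - f (t i)) by ring, abs_neg]

lemma sys_le_DTVc {f : ℝ → ℝ} {c a b : ℝ} {n : ℕ} {u v : ℕ → ℝ} (hS : Sys a b n u v) :
    ENNReal.ofReal (rawD f c n u v) ≤ DTVc f c a b := by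
  have := sys_le_UTVc (f := negF f) (c := c) hS
  rwa [rawU_negF, UTVc_negF] at this

/-! ### extraction of a system from a partition -/

lemma part_to_sys (f : ℝ → ℝ) (c : ℝ) {a b : ℝ} {n : ℕ} {t : ℕ → ℝ} (hpt : IsPart a b n t) :
    ∃ k u v, Sys a b k u v ∧ 0 ≤ rawU f c k u v ∧
      ENNReal.ofReal (rawU f c k u v)
        = ∑ i ∈ Finset.range n, ENNReal.ofReal (f (t (i + 1)) - f (t i) - c) := by
  classical
  set J := (Finset.range n).filter (fun i => 0 < f (t (i + 1)) - f (t i) - c) with hJ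
  set e := J.orderEmbOfFin rfl with he
  have hmem : ∀ i : Fin J.card, e i ∈ J := fun i => Finset.orderEmbOfFin_mem J rfl i
  have hrange : ∀ i : Fin J.card, e i < n := fun i =>
    Finset.mem_range.mp (Finset.mem_filter.mp (hmem i)).1
  have hpos : ∀ i : Fin J.card, 0 < f (t (e i + 1)) - f (t (e i)) - c := fun i =>
    (Finset.mem_filter.mp (hmem i)).2
  refine ⟨J.card, fun i => if h : i < J.card then t (e ⟨i, h⟩) else b,
    fun i => if h : i < J.card then t (e ⟨i, h⟩ + 1) else b, ?_, ?_, ?_⟩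
  · constructor
    · intro i hi
      beta_reduce
      rw [dif_pos hi, dif_pos hi]
      exact ⟨le_trans hpt.1 (part_le hpt (Nat.zero_le _) (by have := hrange ⟨i, hi⟩; omega)),
        hpt.2.2 _ (hrange ⟨i, hi⟩),
        le_trans (part_le hpt (by have := hrange ⟨i, hi⟩; omega) le_rfl) hpt.2.1⟩
    · intro i hi
      beta_reduce
      rw [dif_pos (by omega : i < J.card), dif_pos hi]
      have hlt : e ⟨i, by omega⟩ < e ⟨i + 1, hi⟩ := e.strictMono (by simp)
      exact part_le hpt (by omega) (by have := hrange ⟨i + 1, hi⟩; omega)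
  · rw [rawU, Finset.sum_range]
    refine Finset.sum_nonneg fun i _ => ?_
    beta_reduce
    rw [dif_pos i.isLt, dif_pos i.isLt]
    exact (hpos ⟨i, i.isLt⟩).le
  · have key : rawU f c J.card (fun i => if h : i < J.card then t (e ⟨i, h⟩) else b)
        (fun i => if h : i < J.card then t (e ⟨i, h⟩ + 1) else b)
        = ∑ j ∈ J, (f (t (j + 1)) - f (t j) - c) := by
      rw [rawU, Finset.sum_range]
      have : ∀ i : Fin J.card,
          ((f (if h : (i : ℕ) < J.card then t (e ⟨i, h⟩ + 1) else b)
            - f (if h : (i : ℕ) < J.card then t (e ⟨i, h⟩) else b) - c))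
          = f (t (e i + 1)) - f (t (e i)) - c := by
        intro i
        rw [dif_pos i.isLt, dif_pos i.isLt]
      rw [Finset.sum_congr rfl fun i _ => this i]
      rw [← Finset.sum_attach J (fun j => f (t (j + 1)) - f (t j) - c)]
      refine Fintype.sum_equiv (J.orderIsoOfFin rfl).toEquiv _ _ fun i => ?_
      rw [← Finset.coe_orderIsoOfFin_apply]
      rfl
    rw [key]
    rw [ENNReal.ofReal_sum_of_nonneg fun j hj => (Finset.mem_filter.mp hj).2.le]
    refine Finset.sum_subset (Finset.filter_subset _ _) fun x hx hnx => ?_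
    rw [ENNReal.ofReal_eq_zero]
    have : ¬ (0 < f (t (x + 1)) - f (t x) - c) := fun hcon =>
      hnx (Finset.mem_filter.mpr ⟨hx, hcon⟩)
    linarith

lemma exists_part_gt {g : ℝ → ℝ → ℝ} {a b : ℝ} {X : ENNReal} (h : X < pVar g a b) :
    ∃ n t, IsPart a b n t ∧ X < partSum g n t := by
  simp only [pVar, lt_iSup_iff] at h
  obtain ⟨n, t, hp, hlt⟩ := h
  exact ⟨n, t, hp, hlt⟩

lemma exists_sys_gt_UTVc {f : ℝ → ℝ} {c a b : ℝ} (h : UTVc f c a b ≠ ⊤) {ε : ℝ} (hε : 0 < ε) :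
    ∃ k u v, Sys a b k u v ∧ (UTVc f c a b).toReal - ε < rawU f c k u v := by
  rcases lt_or_ge ((UTVc f c a b).toReal) ε with h1 | h1
  · exact ⟨0, (fun _ => a), (fun _ => a), sys_zero a b _ _, by rw [rawU_zero]; linarith⟩
  · have h0 : (0 : ℝ) ≤ (UTVc f c a b).toReal - ε := by linarith
    have hlt : ENNReal.ofReal ((UTVc f c a b).toReal - ε) < UTVc f c a b := by
      conv_rhs => rw [← ENNReal.ofReal_toReal h]
      rw [ENNReal.ofReal_lt_ofReal_iff_of_nonneg h0]
      linarith
    rw [UTVc_eq_pVar] at hlt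
    obtain ⟨n, t, hp, hlt⟩ := exists_part_gt hlt
    obtain ⟨k, u, v, hS, hnn, heq⟩ := part_to_sys f c hp
    refine ⟨k, u, v, hS, ?_⟩
    have : ENNReal.ofReal ((UTVc f c a b).toReal - ε) < ENNReal.ofReal (rawU f c k u v) := by
      rw [heq]; exact hlt
    exact (ENNReal.ofReal_lt_ofReal_iff_of_nonneg h0).mp this

lemma exists_sys_gt_DTVc {f : ℝ → ℝ} {c a b : ℝ} (h : DTVc f c a b ≠ ⊤) {ε : ℝ} (hε : 0 < ε) :
    ∃ k u v, Sys a b k u v ∧ (DTVc f c a b).toReal - ε < rawD f c k u v := by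
  have h' : UTVc (negF f) c a b ≠ ⊤ := by rwa [UTVc_negF]
  obtain ⟨k, u, v, hS, hgt⟩ := exists_sys_gt_UTVc h' hε
  rw [UTVc_negF, rawU_negF] at hgt
  exact ⟨k, u, v, hS, hgt⟩

/-! ### cons for systems -/

lemma rawU_cons (f : ℝ → ℝ) (c : ℝ) (k : ℕ) (x y : ℝ) (uu vv : ℕ → ℝ) :
    rawU f c (k + 1) (cons1 x uu) (cons1 y vv) = (f y - f x - c) + rawU f c k uu vv := by
  rw [rawU_succ']
  simp only [cons1_zero, cons1_succ]

lemma rawD_cons (f : ℝ → ℝ) (c : ℝ) (k : ℕ) (x y : ℝ) (uu vv : ℕ → ℝ) :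
    rawD f c (k + 1) (cons1 x uu) (cons1 y vv) = (f x - f y - c) + rawD f c k uu vv := by
  rw [rawD_succ']
  simp only [cons1_zero, cons1_succ]

lemma sys_cons {b w x y : ℝ} {k : ℕ} {uu vv : ℕ → ℝ} (hwx : w ≤ x) (hxy : x < y) (hyb : y ≤ b)
    (hS : Sys y b k uu vv) : Sys w b (k + 1) (cons1 x uu) (cons1 y vv) := by
  constructor
  · intro i hi
    match i with
    | 0 => exact ⟨hwx, hxy, hyb⟩
    | j + 1 =>
      simp only [cons1_succ]
      exact ⟨le_trans hwx (le_trans hxy.le (hS.1 j (by omega)).1), (hS.1 j (by omega)).2.1,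
        (hS.1 j (by omega)).2.2⟩
  · intro i hi
    match i with
    | 0 =>
      show y ≤ uu 0
      exact (hS.1 0 (by omega)).1
    | j + 1 =>
      simp only [cons1_succ]
      exact hS.2 j (by omega)

lemma sys_weaken {a a' b : ℝ} {n : ℕ} {u v : ℕ → ℝ} (h : a' ≤ a) (hS : Sys a b n u v) :
    Sys a' b n u v :=
  ⟨fun i hi => ⟨le_trans h (hS.1 i hi).1, (hS.1 i hi).2.1, (hS.1 i hi).2.2⟩, hS.2⟩

lemma TVc_mono_left {f : ℝ → ℝ} {c a a' b : ℝ} (h : a' ≤ a) : TVc f c a b ≤ TVc f c a' b := by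
  rw [TVc_eq_pVar, TVc_eq_pVar]
  exact pVar_mono_left h

lemma peel_tv {f : ℝ → ℝ} {c a b x y r T : ℝ}
    (hax : a ≤ x) (hxy : x < y) (hyb : y ≤ b)
    (hr : r ≤ dist (f y) (f x) - c)
    (hT : ENNReal.ofReal T ≤ TVc f c y b) :
    ENNReal.ofReal (r + T) ≤ TVc f c a b := by
  calc ENNReal.ofReal (r + T) ≤ ENNReal.ofReal r + ENNReal.ofReal T := ENNReal.ofReal_add_le
    _ ≤ ENNReal.ofReal (dist (f y) (f x) - c) + TVc f c y b := by
        exact add_le_add (ENNReal.ofReal_le_ofReal hr) hT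
    _ ≤ TVc f c a b := by
        rw [TVc_eq_pVar, TVc_eq_pVar]
        exact pVar_prepend (g := fun x y => dist (f y) (f x) - c) hax hxy hyb

/-! ### the uncrossing lemma -/

lemma uncross_core {c : ℝ} (hc : 0 < c) (b : ℝ) :
    ∀ N : ℕ, ∀ (f : ℝ → ℝ) (a : ℝ) (n m : ℕ) (u v p q : ℕ → ℝ),
      n + m ≤ N → Sys a b n u v → Sys a b m p q →
      ENNReal.ofReal (rawU f c n u v + rawD f c m p q) ≤ TVc f c a b := by
  intro N
  induction N with
  | zero =>
    intro f a n m u v p q hN hU hD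
    have hn : n = 0 := by omega
    have hm : m = 0 := by omega
    subst hn; subst hm
    simp [rawU_zero, rawD_zero]
  | succ N ih =>
    intro f a n m u v p q hN hU hD
    have aux : ∀ (f : ℝ → ℝ) (n m : ℕ) (u v p q : ℕ → ℝ),
        n + m ≤ N + 1 → Sys a b n u v → Sys a b m p q →
        (0 < n → 0 < m → u 0 ≤ p 0) →
        ENNReal.ofReal (rawU f c n u v + rawD f c m p q) ≤ TVc f c a b := by
      clear hN hU hD n m u v p q f
      intro f n m u v p q hN hU hD hcond
      rcases Nat.eq_zero_or_pos n with hn0 | hn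
      · rcases Nat.eq_zero_or_pos m with hm0 | hm
        · subst hn0; subst hm0
          simp [rawU_zero, rawD_zero]
        · -- n = 0, peel head of D
          subst hn0
          obtain ⟨mm, rfl⟩ : ∃ mm, m = mm + 1 := ⟨m - 1, by omega⟩
          have hD0 := hD.1 0 (by omega)
          have hT : ENNReal.ofReal
              (rawD f c mm (fun i => p (i + 1)) (fun i => q (i + 1))) ≤ TVc f c (q 0) b := by
            have := ih f (q 0) 0 mm (fun _ => q 0) (fun _ => q 0)
              (fun i => p (i + 1)) (fun i => q (i + 1)) (by omega)
              (sys_zero _ _ _ _) (sys_tail hD)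
            rwa [rawU_zero, zero_add] at this
          rw [rawU_zero, zero_add, rawD_succ']
          refine peel_tv hD0.1 hD0.2.1 hD0.2.2 ?_ hT
          rw [Real.dist_eq]
          have := neg_le_abs (f (q 0) - f (p 0))
          linarith
      · rcases Nat.eq_zero_or_pos m with hm0 | hm
        · -- m = 0, peel head of U
          subst hm0
          obtain ⟨nn, rfl⟩ : ∃ nn, n = nn + 1 := ⟨n - 1, by omega⟩
          have hU0 := hU.1 0 (by omega)
          have hT : ENNReal.ofReal
              (rawU f c nn (fun i => u (i + 1)) (fun i => v (i + 1))) ≤ TVc f c (v 0) b := by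
            have := ih f (v 0) nn 0 (fun i => u (i + 1)) (fun i => v (i + 1))
              (fun _ => v 0) (fun _ => v 0) (by omega) (sys_tail hU) (sys_zero _ _ _ _)
            rwa [rawD_zero, add_zero] at this
          rw [rawD_zero, add_zero, rawU_succ']
          refine peel_tv hU0.1 hU0.2.1 hU0.2.2 ?_ hT
          rw [Real.dist_eq]
          have := le_abs_self (f (v 0) - f (u 0))
          linarith
        · -- both positive, u 0 ≤ p 0
          have hup := hcond hn hm
          obtain ⟨nn, rfl⟩ : ∃ nn, n = nn + 1 := ⟨n - 1, by omega⟩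
          obtain ⟨mm, rfl⟩ : ∃ mm, m = mm + 1 := ⟨m - 1, by omega⟩
          have hU0 := hU.1 0 (by omega)
          have hD0 := hD.1 0 (by omega)
          rcases le_or_gt (v 0) (p 0) with hvp | hpv
          · -- disjoint: peel head of U
            have hT : ENNReal.ofReal
                (rawU f c nn (fun i => u (i + 1)) (fun i => v (i + 1)) + rawD f c (mm + 1) p q)
                  ≤ TVc f c (v 0) b :=
              ih f (v 0) nn (mm + 1) _ _ p q (by omega) (sys_tail hU) (sys_start hD hvp)
            rw [rawU_succ', add_assoc]
            refine peel_tv hU0.1 hU0.2.1 hU0.2.2 ?_ hT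
            rw [Real.dist_eq]
            have := le_abs_self (f (v 0) - f (u 0))
            linarith
          · rcases lt_or_ge (q 0) (v 0) with hqv | hvq
            · -- nested: down pair inside up pair
              have hUnew : Sys (p 0) b (nn + 1) (cons1 (q 0) (fun i => u (i + 1)))
                  (cons1 (v 0) (fun i => v (i + 1))) :=
                sys_cons hD0.2.1.le hqv hU0.2.2 (sys_tail hU)
              have hDnew : Sys (p 0) b mm (fun i => p (i + 1)) (fun i => q (i + 1)) :=
                sys_weaken hD0.2.1.le (sys_tail hD)
              have hT := ih f (p 0) (nn + 1) mm _ _ _ _ (by omega) hUnew hDnew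
              have hid : rawU f c (nn + 1) u v + rawD f c (mm + 1) p q
                  = (f (p 0) - f (u 0) - c)
                    + (rawU f c (nn + 1) (cons1 (q 0) (fun i => u (i + 1)))
                        (cons1 (v 0) (fun i => v (i + 1)))
                       + rawD f c mm (fun i => p (i + 1)) (fun i => q (i + 1))) := by
                rw [rawU_succ', rawD_succ', rawU_cons]
                ring
              rw [hid]
              rcases eq_or_lt_of_le hup with heq | hlt
              · refine le_trans (ENNReal.ofReal_le_ofReal ?_)
                  (le_trans hT (TVc_mono_left hD0.1))
                rw [← heq]
                linarith
              · refine peel_tv hU0.1 hlt (le_trans hD0.2.1.le hD0.2.2) ?_ hT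
                rw [Real.dist_eq]
                have := le_abs_self (f (p 0) - f (u 0))
                linarith
            · -- overlap: v 0 ≤ q 0
              rcases eq_or_lt_of_le hvq with heqv | hltv
              · -- v 0 = q 0 : degenerate new down head, drop it
                have hUnew : Sys (p 0) b nn (fun i => u (i + 1)) (fun i => v (i + 1)) :=
                  sys_weaken hpv.le (sys_tail hU)
                have hDnew : Sys (p 0) b mm (fun i => p (i + 1)) (fun i => q (i + 1)) :=
                  sys_weaken hD0.2.1.le (sys_tail hD)
                have hT := ih f (p 0) nn mm _ _ _ _ (by omega) hUnew hDnew
                have hid : rawU f c (nn + 1) u v + rawD f c (mm + 1) p q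
                    = (f (p 0) - f (u 0) - c) + (- c +
                      (rawU f c nn (fun i => u (i + 1)) (fun i => v (i + 1))
                       + rawD f c mm (fun i => p (i + 1)) (fun i => q (i + 1)))) := by
                  rw [rawU_succ', rawD_succ', ← heqv]
                  ring
                rw [hid]
                rcases eq_or_lt_of_le hup with heq | hlt
                · refine le_trans (ENNReal.ofReal_le_ofReal ?_)
                    (le_trans hT (TVc_mono_left hD0.1))
                  rw [← heq]
                  linarith
                · refine peel_tv hU0.1 hlt (le_trans hD0.2.1.le hD0.2.2) ?_ ?_
                  · rw [Real.dist_eq]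
                    have := le_abs_self (f (p 0) - f (u 0))
                    linarith
                  · refine le_trans (ENNReal.ofReal_le_ofReal ?_) hT
                    linarith
              · -- v 0 < q 0 : swap heads
                have hUnew : Sys (p 0) b nn (fun i => u (i + 1)) (fun i => v (i + 1)) :=
                  sys_weaken hpv.le (sys_tail hU)
                have hDnew : Sys (p 0) b (mm + 1) (cons1 (v 0) (fun i => p (i + 1)))
                    (cons1 (q 0) (fun i => q (i + 1))) :=
                  sys_cons hpv.le hltv hD0.2.2 (sys_tail hD)
                have hT := ih f (p 0) nn (mm + 1) _ _ _ _ (by omega) hUnew hDnew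
                have hid : rawU f c (nn + 1) u v + rawD f c (mm + 1) p q
                    = (f (p 0) - f (u 0) - c)
                      + (rawU f c nn (fun i => u (i + 1)) (fun i => v (i + 1))
                         + rawD f c (mm + 1) (cons1 (v 0) (fun i => p (i + 1)))
                            (cons1 (q 0) (fun i => q (i + 1)))) := by
                  rw [rawU_succ', rawD_succ', rawD_cons]
                  ring
                rw [hid]
                rcases eq_or_lt_of_le hup with heq | hlt
                · refine le_trans (ENNReal.ofReal_le_ofReal ?_)
                    (le_trans hT (TVc_mono_left hD0.1))
                  rw [← heq]
                  linarith
                · refine peel_tv hU0.1 hlt (le_trans hD0.2.1.le hD0.2.2) ?_ hT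
                  rw [Real.dist_eq]
                  have := le_abs_self (f (p 0) - f (u 0))
                  linarith
    -- use aux, possibly mirrored
    rcases Nat.eq_zero_or_pos n with hn0 | hn
    · exact aux f n m u v p q hN hU hD (by omega)
    · rcases Nat.eq_zero_or_pos m with hm0 | hm
      · exact aux f n m u v p q hN hU hD (by omega)
      · rcases le_or_gt (u 0) (p 0) with hle | hgt
        · exact aux f n m u v p q hN hU hD (fun _ _ => hle)
        · have hneg := aux (negF f) m n p q u v (by omega) hD hU (fun _ _ => hgt.le)
          rw [rawU_negF, rawD_negF, TVc_negF, add_comm] at hneg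
          exact hneg

/-! ### band lemma -/

lemma sys_weaken_right {a b b' : ℝ} {n : ℕ} {u v : ℕ → ℝ} (h : b ≤ b') (hS : Sys a b n u v) :
    Sys a b' n u v :=
  ⟨fun i hi => ⟨(hS.1 i hi).1, (hS.1 i hi).2.1, le_trans (hS.1 i hi).2.2 h⟩, hS.2⟩

lemma band_sys {f : ℝ → ℝ} {c a s : ℝ} (hc : 0 < c) (has : a ≤ s) :
    ∀ (m : ℕ) (t : ℝ), s ≤ t → ∀ (p q : ℕ → ℝ), Sys a t m p q →
      ∀ (n : ℕ) (u v : ℕ → ℝ), Sys a s n u v →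
      ∃ n' u' v', Sys a t n' u' v' ∧ ∃ m' p' q', Sys a s m' p' q' ∧
        rawU f c n u v + rawD f c m p q + (f t - f s - c)
          ≤ rawU f c n' u' v' + rawD f c m' p' q' := by
  intro m
  induction m with
  | zero =>
    intro t hst p q hD n u v hU
    rcases eq_or_lt_of_le hst with rfl | hlt
    · refine ⟨n, u, v, hU, 0, p, q, sys_zero _ _ _ _, ?_⟩
      rw [rawD_zero]
      linarith
    · refine ⟨n + 1, snocF u n s, snocF v n t, sys_snoc has hU le_rfl hlt le_rfl,
        0, p, q, sys_zero _ _ _ _, ?_⟩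
      rw [rawU_snoc, rawD_zero]
      linarith
  | succ mm ihm =>
    intro t hst p q hD n u v hU
    have hDm := hD.1 mm (by omega)
    have hexp := rawD_succ f c mm p q
    rcases le_or_gt (q mm) s with hqs | hsq
    · -- last pair already within [a, s]
      have hDs : Sys a s (mm + 1) p q := by
        constructor
        · intro i hi
          refine ⟨(hD.1 i hi).1, (hD.1 i hi).2.1, ?_⟩
          rcases Nat.lt_or_ge i mm with h | h
          · exact le_trans (sys_vu hD h (by omega)) (le_trans hDm.2.1.le hqs)
          · have hieq : i = mm := by omega
            rw [hieq]; exact hqs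
        · exact hD.2
      rcases eq_or_lt_of_le hst with rfl | hlt
      · exact ⟨n, u, v, hU, mm + 1, p, q, hDs, by linarith⟩
      · refine ⟨n + 1, snocF u n s, snocF v n t, sys_snoc has hU le_rfl hlt le_rfl,
          mm + 1, p, q, hDs, ?_⟩
        rw [rawU_snoc]
        linarith
    · rcases le_or_gt (p mm) s with hps | hsp
      · -- straddle : p mm ≤ s < q mm
        have hDs : Sys a s mm p q := by
          constructor
          · intro i hi
            exact ⟨(hD.1 i (by omega)).1, (hD.1 i (by omega)).2.1,
              le_trans (sys_vu hD hi (by omega)) hps⟩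
          · intro i hi
            exact hD.2 i (by omega)
        have hD' : ∃ m' p' q', Sys a s m' p' q' ∧
            rawD f c mm p q + (f (p mm) - f s - c) ≤ rawD f c m' p' q' := by
          rcases eq_or_lt_of_le hps with heq | hlt'
          · exact ⟨mm, p, q, hDs, by rw [heq]; linarith⟩
          · refine ⟨mm + 1, snocF p mm (p mm), snocF q mm s,
              sys_snoc hDm.1 (sys_front hD) le_rfl hlt' le_rfl, ?_⟩
            rw [rawD_snoc]
        obtain ⟨m', p', q', hD's, hineqd⟩ := hD'
        have hU' : ∃ n' u' v', Sys a t n' u' v' ∧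
            rawU f c n u v + (f t - f (q mm) - c) ≤ rawU f c n' u' v' := by
          rcases eq_or_lt_of_le hDm.2.2 with heq | hlt'
          · exact ⟨n, u, v, sys_weaken_right hst hU, by rw [heq]; linarith⟩
          · refine ⟨n + 1, snocF u n (q mm), snocF v n t,
              sys_snoc has hU hsq.le hlt' le_rfl, ?_⟩
            rw [rawU_snoc]
        obtain ⟨n', u', v', hU't, hinequ⟩ := hU'
        exact ⟨n', u', v', hU't, m', p', q', hD's, by linarith⟩
      · -- s < p mm : recurse
        obtain ⟨n1, u1, v1, hU1, m', p', q', hD's, hineq1⟩ :=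
          ihm (p mm) hsp.le p q (sys_front hD) n u v hU
        have hU' : ∃ n' u' v', Sys a t n' u' v' ∧
            rawU f c n1 u1 v1 + (f t - f (q mm) - c) ≤ rawU f c n' u' v' := by
          rcases eq_or_lt_of_le hDm.2.2 with heq | hlt'
          · exact ⟨n1, u1, v1, sys_weaken_right (le_trans hDm.2.1.le hDm.2.2) hU1,
              by rw [heq]; linarith⟩
          · refine ⟨n1 + 1, snocF u1 n1 (q mm), snocF v1 n1 t,
              sys_snoc hDm.1 hU1 hDm.2.1.le hlt' le_rfl, ?_⟩
            rw [rawU_snoc]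
        obtain ⟨n', u', v', hU't, hinequ⟩ := hU'
        exact ⟨n', u', v', hU't, m', p', q', hD's, by linarith⟩

lemma band_enn {f : ℝ → ℝ} {c a s t : ℝ} (hc : 0 < c) (has : a ≤ s) (hst : s ≤ t)
    {n : ℕ} {u v : ℕ → ℝ} (hU : Sys a s n u v) {m : ℕ} {p q : ℕ → ℝ} (hD : Sys a t m p q) :
    ENNReal.ofReal (rawU f c n u v + rawD f c m p q + (f t - f s - c))
      ≤ UTVc f c a t + DTVc f c a s := by
  obtain ⟨n', u', v', hU', m', p', q', hD', hineq⟩ := band_sys hc has m t hst p q hD n u v hU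
  calc ENNReal.ofReal (rawU f c n u v + rawD f c m p q + (f t - f s - c))
      ≤ ENNReal.ofReal (rawU f c n' u' v' + rawD f c m' p' q') :=
        ENNReal.ofReal_le_ofReal hineq
    _ ≤ ENNReal.ofReal (rawU f c n' u' v') + ENNReal.ofReal (rawD f c m' p' q') :=
        ENNReal.ofReal_add_le
    _ ≤ UTVc f c a t + DTVc f c a s := add_le_add (sys_le_UTVc hU') (sys_le_DTVc hD')

lemma UTVc_mono_right {f : ℝ → ℝ} {c a b b' : ℝ} (h : b ≤ b') : UTVc f c a b ≤ UTVc f c a b' := by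
  rw [UTVc_eq_pVar, UTVc_eq_pVar]; exact pVar_mono_right h

lemma DTVc_mono_right {f : ℝ → ℝ} {c a b b' : ℝ} (h : b ≤ b') : DTVc f c a b ≤ DTVc f c a b' := by
  rw [DTVc_eq_pVar, DTVc_eq_pVar]; exact pVar_mono_right h

lemma band_real {f : ℝ → ℝ} {c a s t : ℝ} (hc : 0 < c) (has : a ≤ s) (hst : s ≤ t)
    (hfu : UTVc f c a t ≠ ⊤) (hfd : DTVc f c a t ≠ ⊤) :
    f t - f s - c ≤ ((UTVc f c a t).toReal - (DTVc f c a t).toReal)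
      - ((UTVc f c a s).toReal - (DTVc f c a s).toReal) := by
  have hfu' : UTVc f c a s ≠ ⊤ := fun h => hfu (top_le_iff.mp (h ▸ UTVc_mono_right hst))
  have hfd' : DTVc f c a s ≠ ⊤ := fun h => hfd (top_le_iff.mp (h ▸ DTVc_mono_right hst))
  have key : ∀ ε : ℝ, 0 < ε →
      (UTVc f c a s).toReal - (DTVc f c a s).toReal + (f t - f s - c)
        ≤ ((UTVc f c a t).toReal - (DTVc f c a t).toReal) + 2 * ε := by
    intro ε hε
    obtain ⟨k1, u1, v1, hS1, hgt1⟩ := exists_sys_gt_UTVc hfu' hε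
    obtain ⟨k2, p2, q2, hS2, hgt2⟩ := exists_sys_gt_DTVc hfd hε
    have henn := band_enn hc has hst hS1 hS2 (f := f)
    have hrhs : UTVc f c a t + DTVc f c a s
        = ENNReal.ofReal ((UTVc f c a t).toReal + (DTVc f c a s).toReal) := by
      rw [ENNReal.ofReal_add ENNReal.toReal_nonneg ENNReal.toReal_nonneg,
        ENNReal.ofReal_toReal hfu, ENNReal.ofReal_toReal hfd']
    rw [hrhs] at henn
    have hreal : rawU f c k1 u1 v1 + rawD f c k2 p2 q2 + (f t - f s - c)
        ≤ (UTVc f c a t).toReal + (DTVc f c a s).toReal :=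
      (ENNReal.ofReal_le_ofReal_iff (by positivity)).mp henn
    linarith
  have hfin : (UTVc f c a s).toReal - (DTVc f c a s).toReal + (f t - f s - c)
      ≤ (UTVc f c a t).toReal - (DTVc f c a t).toReal := by
    refine le_of_forall_pos_le_add fun ε hε => ?_
    have := key (ε / 2) (by linarith)
    linarith
  linarith

/-! ### finiteness of TVc for cadlag functions -/

def Fine (f : ℝ → ℝ) (c a x : ℝ) : Prop :=
  ∃ K : ℕ, ∃ xs : ℕ → ℝ, xs 0 = a ∧ xs K = x ∧ (∀ j < K, xs j < xs (j + 1)) ∧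
    ∀ j < K, ∀ y ∈ Set.Ioo (xs j) (xs (j + 1)), ∀ z ∈ Set.Ioo (xs j) (xs (j + 1)),
      |f y - f z| ≤ c

lemma fine_self (f : ℝ → ℝ) (c a : ℝ) : Fine f c a a :=
  ⟨0, fun _ => a, rfl, rfl, fun j hj => absurd hj (by omega), fun j hj => absurd hj (by omega)⟩

lemma fine_extend {f : ℝ → ℝ} {c a x y : ℝ} (hF : Fine f c a x) (hxy : x < y)
    (hosc : ∀ z ∈ Set.Ioo x y, ∀ z' ∈ Set.Ioo x y, |f z - f z'| ≤ c) : Fine f c a y := by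
  obtain ⟨K, xs, h0, hK, hmono, hoscs⟩ := hF
  refine ⟨K + 1, fun j => if j ≤ K then xs j else y, ?_, ?_, ?_, ?_⟩
  · simpa using h0
  · beta_reduce
    rw [if_neg (by omega)]
  · intro j hj
    beta_reduce
    rcases Nat.lt_or_ge j K with h | h
    · rw [if_pos (by omega), if_pos (by omega)]
      exact hmono j h
    · have hjK : j = K := by omega
      rw [if_pos (by omega), if_neg (by omega), hjK, hK]
      exact hxy
  · intro j hj z hz z' hz'
    beta_reduce at hz hz'
    rcases Nat.lt_or_ge j K with h | h
    · rw [if_pos (by omega : j ≤ K), if_pos (by omega : j + 1 ≤ K)] at hz hz'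
      exact hoscs j h z hz z' hz'
    · have hjK : j = K := by omega
      rw [if_pos (by omega : j ≤ K), if_neg (by omega : ¬ (j + 1 ≤ K)), hjK, hK] at hz hz'
      exact hosc z hz z' hz'

lemma fine_all {f : ℝ → ℝ} {c a b : ℝ} (hab : a < b) (hf : Cadlag f a b) (hc : 0 < c) :
    Fine f c a b := by
  set A := {x : ℝ | x ∈ Set.Icc a b ∧ Fine f c a x} with hA
  have haA : a ∈ A := ⟨⟨le_rfl, hab.le⟩, fine_self f c a⟩
  have hane : A.Nonempty := ⟨a, haA⟩
  have hbdd : BddAbove A := ⟨b, fun x hx => hx.1.2⟩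
  set m := sSup A with hm
  have ham : a ≤ m := le_csSup hbdd haA
  have hmb : m ≤ b := csSup_le hane fun x hx => hx.1.2
  have hFm : Fine f c a m := by
    rcases eq_or_lt_of_le ham with heq | ham'
    · exact heq ▸ fine_self f c a
    · obtain ⟨L, hL⟩ := hf.2 m ⟨ham', hmb⟩
      rw [Metric.tendsto_nhdsWithin_nhds] at hL
      obtain ⟨δ, hδ, hball⟩ := hL (c / 2) (by linarith)
      obtain ⟨x, hxA, hxgt⟩ := exists_lt_of_lt_csSup hane (show m - δ < m by linarith)
      have hxm : x ≤ m := le_csSup hbdd hxA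
      rcases eq_or_lt_of_le hxm with rfl | hxm'
      · exact hxA.2
      · refine fine_extend hxA.2 hxm' ?_
        intro z hz z' hz'
        have hd : ∀ w : ℝ, w ∈ Set.Ioo x m → dist (f w) L < c / 2 := by
          intro w hw
          refine hball hw.2 ?_
          rw [Real.dist_eq, abs_of_nonpos (by linarith [hw.2])]
          linarith [hw.1]
        have h1 := hd z hz
        have h2 := hd z' hz'
        rw [Real.dist_eq] at h1 h2
        calc |f z - f z'| ≤ |f z - L| + |L - f z'| := abs_sub_le _ _ _
          _ ≤ c := by rw [abs_sub_comm L (f z')]; linarith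
  have hmA : m ∈ A := ⟨⟨ham, hmb⟩, hFm⟩
  rcases eq_or_lt_of_le hmb with heq | hmb'
  · exact heq ▸ hFm
  · exfalso
    have hrc := hf.1 m ⟨ham, hmb'⟩
    rw [Metric.tendsto_nhdsWithin_nhds] at hrc
    obtain ⟨δ, hδ, hball⟩ := hrc (c / 2) (by linarith)
    set y := min b (m + δ / 2) with hy
    have hy1 : m < y := lt_min hmb' (by linarith)
    have hy2 : y ≤ b := min_le_left _ _
    have hy3 : y ≤ m + δ / 2 := min_le_right _ _
    have hFy : Fine f c a y := by
      refine fine_extend hFm hy1 ?_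
      intro z hz z' hz'
      have hd : ∀ w : ℝ, w ∈ Set.Ioo m y → dist (f w) (f m) < c / 2 := by
        intro w hw
        refine hball hw.1 ?_
        rw [Real.dist_eq, abs_of_nonneg (by linarith [hw.1])]
        linarith [hw.2]
      have h1 := hd z hz
      have h2 := hd z' hz'
      rw [Real.dist_eq] at h1 h2
      calc |f z - f z'| ≤ |f z - f m| + |f m - f z'| := abs_sub_le _ _ _
        _ ≤ c := by rw [abs_sub_comm (f m) (f z')]; linarith
    have : y ≤ m := le_csSup hbdd ⟨⟨le_trans ham hy1.le, hy2⟩, hFy⟩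
    linarith

lemma locate {a b : ℝ} {K : ℕ} {xs : ℕ → ℝ} (h0 : xs 0 = a) (hK : xs K = b)
    (hmono : ∀ j < K, xs j < xs (j + 1)) {uu ww : ℝ} (hau : a ≤ uu) (huw : uu ≤ ww)
    (hwb : ww ≤ b) :
    (∃ j ≤ K, xs j ∈ Set.Icc uu ww) ∨ (∃ j < K, xs j < uu ∧ ww < xs (j + 1)) := by
  classical
  set T := (Finset.range (K + 1)).filter (fun j => xs j ≤ uu) with hT
  have hTne : T.Nonempty :=
    ⟨0, Finset.mem_filter.mpr ⟨Finset.mem_range.mpr (by omega), by rw [h0]; exact hau⟩⟩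
  set j0 := T.max' hTne with hj0
  have hj0T := T.max'_mem hTne
  have hj0K : j0 ≤ K := Nat.lt_succ_iff.mp (Finset.mem_range.mp (Finset.mem_filter.mp hj0T).1)
  have hj0le : xs j0 ≤ uu := (Finset.mem_filter.mp hj0T).2
  rcases eq_or_lt_of_le hj0le with heq | hlt
  · exact Or.inl ⟨j0, hj0K, heq.ge, heq.le.trans huw⟩
  · have hj0K' : j0 < K := by
      rcases eq_or_lt_of_le hj0K with heq2 | h
      · exfalso
        rw [heq2, hK] at hlt
        linarith
      · exact h
    have hnext : uu < xs (j0 + 1) := by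
      by_contra hcon
      push_neg at hcon
      have hmem : j0 + 1 ∈ T :=
        Finset.mem_filter.mpr ⟨Finset.mem_range.mpr (by omega), hcon⟩
      have := Finset.le_max' T _ hmem
      omega
    rcases le_or_gt (xs (j0 + 1)) ww with h | h
    · exact Or.inl ⟨j0 + 1, by omega, hnext.le, h⟩
    · exact Or.inr ⟨j0, hj0K', hlt, h⟩

lemma exists_bound {f : ℝ → ℝ} {c a b : ℝ} (hc : 0 < c) (hab : a < b) (hF : Fine f c a b) :
    ∃ M : ℝ, 0 ≤ M ∧ ∀ y ∈ Set.Icc a b, |f y| ≤ M := by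
  classical
  obtain ⟨K, xs, h0, hK, hmono, hosc⟩ := hF
  have hK0 : 0 < K := by
    rcases Nat.eq_zero_or_pos K with rfl | h
    · exfalso
      have : a = b := h0.symm.trans hK
      linarith
    · exact h
  have hne1 : ((Finset.range (K + 1)).image (fun j => |f (xs j)|)).Nonempty :=
    Finset.Nonempty.image ⟨0, Finset.mem_range.mpr (by omega)⟩ _
  have hne2 : ((Finset.range K).image (fun j => |f ((xs j + xs (j + 1)) / 2)|)).Nonempty :=
    Finset.Nonempty.image ⟨0, Finset.mem_range.mpr (by omega)⟩ _
  set M1 := ((Finset.range (K + 1)).image (fun j => |f (xs j)|)).max' hne1 with hM1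
  set M2 := ((Finset.range K).image (fun j => |f ((xs j + xs (j + 1)) / 2)|)).max' hne2 with hM2
  have hM1nn : 0 ≤ M1 :=
    le_trans (abs_nonneg (f (xs 0))) (Finset.le_max' _ (|f (xs 0)|)
      (Finset.mem_image.mpr ⟨0, Finset.mem_range.mpr (Nat.succ_pos K), rfl⟩))
  have hM2nn : 0 ≤ M2 :=
    le_trans (abs_nonneg (f ((xs 0 + xs (0 + 1)) / 2)))
      (Finset.le_max' ((Finset.range K).image (fun j => |f ((xs j + xs (j + 1)) / 2)|))
        (|f ((xs 0 + xs (0 + 1)) / 2)|)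
        (Finset.mem_image.mpr ⟨0, Finset.mem_range.mpr hK0, rfl⟩))
  refine ⟨M1 + M2 + c, by positivity, ?_⟩
  intro y hy
  rcases locate h0 hK hmono hy.1 le_rfl hy.2 with ⟨j, hj, hjy⟩ | ⟨j, hj, hjy1, hjy2⟩
  · have hxy : xs j = y := le_antisymm hjy.2 hjy.1
    rw [← hxy]
    have : |f (xs j)| ≤ M1 :=
      Finset.le_max' ((Finset.range (K + 1)).image (fun j => |f (xs j)|)) (|f (xs j)|)
        (Finset.mem_image.mpr ⟨j, Finset.mem_range.mpr (by omega), rfl⟩)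
    linarith
  · have hmlt := hmono j hj
    have hmid : (xs j + xs (j + 1)) / 2 ∈ Set.Ioo (xs j) (xs (j + 1)) :=
      ⟨by linarith, by linarith⟩
    have hyIoo : y ∈ Set.Ioo (xs j) (xs (j + 1)) := ⟨hjy1, hjy2⟩
    have h1 : |f y - f ((xs j + xs (j + 1)) / 2)| ≤ c := hosc j hj y hyIoo _ hmid
    have h2 : |f ((xs j + xs (j + 1)) / 2)| ≤ M2 :=
      Finset.le_max' ((Finset.range K).image (fun j => |f ((xs j + xs (j + 1)) / 2)|))
        (|f ((xs j + xs (j + 1)) / 2)|)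
        (Finset.mem_image.mpr ⟨j, Finset.mem_range.mpr hj, rfl⟩)
    have h3 : |f y| ≤ |f y - f ((xs j + xs (j + 1)) / 2)| + |f ((xs j + xs (j + 1)) / 2)| := by
      have := abs_sub (f y) (f ((xs j + xs (j + 1)) / 2))
      calc |f y| = |f y - f ((xs j + xs (j + 1)) / 2) + f ((xs j + xs (j + 1)) / 2)| := by
            ring_nf
        _ ≤ _ := abs_add_le _ _
    linarith

lemma TVc_finite {f : ℝ → ℝ} {c a b : ℝ} (hab : a < b) (hf : Cadlag f a b) (hc : 0 < c) :
    TVc f c a b ≠ ⊤ := by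
  classical
  obtain ⟨K, xs, h0, hK, hmono, hosc⟩ := fine_all hab hf hc
  obtain ⟨M, hM0, hM⟩ := exists_bound hc hab ⟨K, xs, h0, hK, hmono, hosc⟩
  have hbound : ∀ n t, IsPart a b n t →
      partSum (fun x y => dist (f y) (f x) - c) n t
        ≤ ((K + 1 : ℕ) : ENNReal) * (2 * ENNReal.ofReal (2 * M)) := by
    intro n t hpt
    have hterm : ∀ i ∈ Finset.range n,
        ENNReal.ofReal (dist (f (t (i + 1))) (f (t i)) - c)
          ≤ ∑ j ∈ Finset.range (K + 1),
              (if xs j ∈ Set.Icc (t i) (t (i + 1)) then ENNReal.ofReal (2 * M) else 0) := by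
      intro i hi
      have hi' := Finset.mem_range.mp hi
      by_cases hd : dist (f (t (i + 1))) (f (t i)) ≤ c
      · rw [ENNReal.ofReal_eq_zero.mpr (by linarith)]
        exact zero_le
      · push_neg at hd
        have hti := part_mem hpt (by omega : i ≤ n)
        have hti1 := part_mem hpt (by omega : i + 1 ≤ n)
        have hstep := hpt.2.2 i hi'
        rcases locate h0 hK hmono hti.1 hstep.le hti1.2 with ⟨j, hj, hjmem⟩ | ⟨j, hj, hj1, hj2⟩
        · refine le_trans ?_ (Finset.single_le_sum (fun j _ => zero_le)
            (Finset.mem_range.mpr (by omega : j < K + 1)))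
          rw [if_pos hjmem]
          apply ENNReal.ofReal_le_ofReal
          have h1 := hM (t i) hti
          have h2 := hM (t (i + 1)) hti1
          rw [Real.dist_eq]
          have := abs_sub (f (t (i + 1))) (f (t i))
          linarith
        · exfalso
          have hosc' := hosc j hj (t (i + 1)) ⟨lt_trans hj1 hstep, hj2⟩
            (t i) ⟨hj1, lt_trans hstep hj2⟩
          rw [Real.dist_eq] at hd
          linarith
    have hinner : ∀ j ∈ Finset.range (K + 1),
        (∑ i ∈ Finset.range n,
          if xs j ∈ Set.Icc (t i) (t (i + 1)) then ENNReal.ofReal (2 * M) else 0)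
          ≤ 2 * ENNReal.ofReal (2 * M) := by
      intro j _
      set S := (Finset.range n).filter (fun i => xs j ∈ Set.Icc (t i) (t (i + 1))) with hS
      have hsum : (∑ i ∈ Finset.range n,
          if xs j ∈ Set.Icc (t i) (t (i + 1)) then ENNReal.ofReal (2 * M) else 0)
            = S.card • ENNReal.ofReal (2 * M) := by
        rw [hS, ← Finset.sum_filter, Finset.sum_const]
      rw [hsum]
      have hcard : S.card ≤ 2 := by
        rcases S.eq_empty_or_nonempty with he | hne
        · rw [he]; simp
        · set i0 := S.min' hne with hi0
          have hi0S := S.min'_mem hne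
          have hi0mem := Finset.mem_filter.mp hi0S
          have hi0n := Finset.mem_range.mp hi0mem.1
          have hsub : S ⊆ {i0, i0 + 1} := by
            intro i hiS
            have hmin := S.min'_le i hiS
            have himem := Finset.mem_filter.mp hiS
            have hin := Finset.mem_range.mp himem.1
            by_contra hne2
            simp only [Finset.mem_insert, Finset.mem_singleton] at hne2
            push_neg at hne2
            have hgt : i0 + 2 ≤ i := by omega
            have hf1 : t i ≤ xs j := himem.2.1
            have hf2 : xs j ≤ t (i0 + 1) := hi0mem.2.2
            have h1 : t (i0 + 1) < t (i0 + 2) := hpt.2.2 (i0 + 1) (by omega)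
            have h2 : t (i0 + 2) ≤ t i := part_le hpt (by omega) (by omega)
            linarith
          calc S.card ≤ ({i0, i0 + 1} : Finset ℕ).card := Finset.card_le_card hsub
            _ ≤ 2 := by
              refine le_trans (Finset.card_insert_le _ _) ?_
              simp
      calc S.card • ENNReal.ofReal (2 * M) = (S.card : ENNReal) * ENNReal.ofReal (2 * M) := by
            rw [nsmul_eq_mul]
        _ ≤ 2 * ENNReal.ofReal (2 * M) := by
            gcongr
            exact_mod_cast hcard
    calc partSum (fun x y => dist (f y) (f x) - c) n t
        ≤ ∑ i ∈ Finset.range n, ∑ j ∈ Finset.range (K + 1),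
            (if xs j ∈ Set.Icc (t i) (t (i + 1)) then ENNReal.ofReal (2 * M) else 0) :=
          Finset.sum_le_sum hterm
      _ = ∑ j ∈ Finset.range (K + 1), ∑ i ∈ Finset.range n,
            (if xs j ∈ Set.Icc (t i) (t (i + 1)) then ENNReal.ofReal (2 * M) else 0) :=
          Finset.sum_comm
      _ ≤ ∑ _j ∈ Finset.range (K + 1), 2 * ENNReal.ofReal (2 * M) :=
          Finset.sum_le_sum hinner
      _ = ((K + 1 : ℕ) : ENNReal) * (2 * ENNReal.ofReal (2 * M)) := by
          rw [Finset.sum_const, Finset.card_range, nsmul_eq_mul]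
  have hle : TVc f c a b ≤ ((K + 1 : ℕ) : ENNReal) * (2 * ENNReal.ofReal (2 * M)) := by
    rw [TVc_eq_pVar]
    exact iSup_le fun n => iSup_le fun t => iSup_le fun hpt => hbound n t hpt
  intro hcon
  have hne : ((K + 1 : ℕ) : ENNReal) * (2 * ENNReal.ofReal (2 * M)) ≠ ⊤ :=
    ENNReal.mul_ne_top (ENNReal.natCast_ne_top _)
      (ENNReal.mul_ne_top (by simp) ENNReal.ofReal_ne_top)
  rw [hcon] at hle
  exact hne (top_le_iff.mp hle)

/-! ### comparisons and assembly -/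

lemma UTVc_le_TVc {f : ℝ → ℝ} {c a b : ℝ} : UTVc f c a b ≤ TVc f c a b := by
  rw [UTVc_eq_pVar, TVc_eq_pVar]
  refine pVar_mono_fun fun x y => ?_
  rw [Real.dist_eq]
  linarith [le_abs_self (f y - f x)]

lemma DTVc_le_TVc {f : ℝ → ℝ} {c a b : ℝ} : DTVc f c a b ≤ TVc f c a b := by
  rw [DTVc_eq_pVar, TVc_eq_pVar]
  refine pVar_mono_fun fun x y => ?_
  rw [Real.dist_eq]
  linarith [neg_le_abs (f y - f x)]

end TVAux

open TVAux

/-- The total variation of `f^{0,c}(s) = UTV^c(f,[a,s]) − DTV^c(f,[a,s])`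
on `[a, s]` equals `TV^c(f,[a,s])`, i.e. `UTV^c − DTV^c` is a minimal (Jordan)
decomposition. -/
theorem tv_of_f0c (a b : ℝ) (hab : a < b) (f : ℝ → ℝ)
    (hf : Cadlag f a b) (c : ℝ) (hc : 0 < c) :
    ∀ s ∈ Set.Ioc a b,
      TVar (fun t => (UTVc f c a t).toReal - (DTVc f c a t).toReal) a s
        = TVc f c a s := by
  intro s hs
  obtain ⟨has, hsb⟩ := hs
  have htvfin : TVc f c a b ≠ ⊤ := TVc_finite hab hf hc
  have hufin : ∀ x, x ≤ b → UTVc f c a x ≠ ⊤ := by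
    intro x hx h
    exact htvfin (top_le_iff.mp (h ▸ le_trans (UTVc_mono_right hx) UTVc_le_TVc))
  have hdfin : ∀ x, x ≤ b → DTVc f c a x ≠ ⊤ := by
    intro x hx h
    exact htvfin (top_le_iff.mp (h ▸ le_trans (DTVc_mono_right hx) DTVc_le_TVc))
  have hTVmono : ∀ x, x ≤ b → TVc f c a x ≤ TVc f c a b := by
    intro x hx
    rw [TVc_eq_pVar, TVc_eq_pVar]
    exact pVar_mono_right hx
  have htfin : ∀ x, x ≤ b → TVc f c a x ≠ ⊤ := fun x hx h =>
    htvfin (top_le_iff.mp (h ▸ hTVmono x hx))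
  have hts : TVc f c a s ≠ ⊤ := htfin s hsb
  have hus : UTVc f c a s ≠ ⊤ := hufin s hsb
  have hds : DTVc f c a s ≠ ⊤ := hdfin s hsb
  apply le_antisymm
  · -- upper bound
    have step1 : TVar (fun t => (UTVc f c a t).toReal - (DTVc f c a t).toReal) a s
        ≤ UTVc f c a s + DTVc f c a s := by
      rw [TVar_eq_pVar]
      refine iSup_le fun n => iSup_le fun t => iSup_le fun hpt => ?_
      have hFineq : ∀ i ∈ Finset.range n,
          dist ((UTVc f c a (t (i + 1))).toReal - (DTVc f c a (t (i + 1))).toReal)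
              ((UTVc f c a (t i)).toReal - (DTVc f c a (t i)).toReal)
            ≤ ((UTVc f c a (t (i + 1))).toReal + (DTVc f c a (t (i + 1))).toReal)
              - ((UTVc f c a (t i)).toReal + (DTVc f c a (t i)).toReal) := by
        intro i hi
        have hi' := Finset.mem_range.mp hi
        have h1 : t i ≤ t (i + 1) := (hpt.2.2 i hi').le
        have hib : t (i + 1) ≤ b :=
          le_trans (le_trans (part_le hpt (le_rfl.trans (by omega : i + 1 ≤ n)) le_rfl)
            hpt.2.1) hsb
        have hib' : t i ≤ b := le_trans h1 hib
        have hu1 : (UTVc f c a (t i)).toReal ≤ (UTVc f c a (t (i + 1))).toReal :=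
          ENNReal.toReal_mono (hufin _ hib) (UTVc_mono_right h1)
        have hd1 : (DTVc f c a (t i)).toReal ≤ (DTVc f c a (t (i + 1))).toReal :=
          ENNReal.toReal_mono (hdfin _ hib) (DTVc_mono_right h1)
        rw [Real.dist_eq]
        rw [abs_le]
        constructor <;> linarith
      calc partSum (fun x y =>
            dist ((UTVc f c a y).toReal - (DTVc f c a y).toReal)
              ((UTVc f c a x).toReal - (DTVc f c a x).toReal)) n t
          ≤ ∑ i ∈ Finset.range n, ENNReal.ofReal
              (((UTVc f c a (t (i + 1))).toReal + (DTVc f c a (t (i + 1))).toReal)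
                - ((UTVc f c a (t i)).toReal + (DTVc f c a (t i)).toReal)) :=
            Finset.sum_le_sum fun i hi => ENNReal.ofReal_le_ofReal (hFineq i hi)
        _ = ENNReal.ofReal (∑ i ∈ Finset.range n,
              (((UTVc f c a (t (i + 1))).toReal + (DTVc f c a (t (i + 1))).toReal)
                - ((UTVc f c a (t i)).toReal + (DTVc f c a (t i)).toReal))) :=
            (ENNReal.ofReal_sum_of_nonneg fun i hi => by
              have := hFineq i hi
              have hd := dist_nonneg (x := (UTVc f c a (t (i + 1))).toReal
                - (DTVc f c a (t (i + 1))).toReal)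
                (y := (UTVc f c a (t i)).toReal - (DTVc f c a (t i)).toReal)
              linarith).symm
        _ = ENNReal.ofReal (((UTVc f c a (t n)).toReal + (DTVc f c a (t n)).toReal)
              - ((UTVc f c a (t 0)).toReal + (DTVc f c a (t 0)).toReal)) := by
            rw [Finset.sum_range_sub (fun i =>
              (UTVc f c a (t i)).toReal + (DTVc f c a (t i)).toReal)]
        _ ≤ ENNReal.ofReal ((UTVc f c a s).toReal + (DTVc f c a s).toReal) := by
            apply ENNReal.ofReal_le_ofReal
            have hn : t n ≤ s := hpt.2.1
            have hnb : t n ≤ b := le_trans hn hsb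
            have hu1 : (UTVc f c a (t n)).toReal ≤ (UTVc f c a s).toReal :=
              ENNReal.toReal_mono hus (UTVc_mono_right hn)
            have hd1 : (DTVc f c a (t n)).toReal ≤ (DTVc f c a s).toReal :=
              ENNReal.toReal_mono hds (DTVc_mono_right hn)
            have h0u : 0 ≤ (UTVc f c a (t 0)).toReal := ENNReal.toReal_nonneg
            have h0d : 0 ≤ (DTVc f c a (t 0)).toReal := ENNReal.toReal_nonneg
            linarith
        _ = UTVc f c a s + DTVc f c a s := by
            rw [ENNReal.ofReal_add ENNReal.toReal_nonneg ENNReal.toReal_nonneg,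
              ENNReal.ofReal_toReal hus, ENNReal.ofReal_toReal hds]
    have step2 : UTVc f c a s + DTVc f c a s ≤ TVc f c a s := by
      have hreal : (UTVc f c a s).toReal + (DTVc f c a s).toReal ≤ (TVc f c a s).toReal := by
        refine le_of_forall_pos_le_add fun ε hε => ?_
        obtain ⟨k1, u1, v1, hS1, h1⟩ := exists_sys_gt_UTVc hus (show (0:ℝ) < ε/2 by linarith)
        obtain ⟨k2, p2, q2, hS2, h2⟩ := exists_sys_gt_DTVc hds (show (0:ℝ) < ε/2 by linarith)
        have hun := uncross_core hc s (k1 + k2) f a k1 k2 u1 v1 p2 q2 le_rfl hS1 hS2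
        rw [← ENNReal.ofReal_toReal hts] at hun
        have h3 : rawU f c k1 u1 v1 + rawD f c k2 p2 q2 ≤ (TVc f c a s).toReal :=
          (ENNReal.ofReal_le_ofReal_iff ENNReal.toReal_nonneg).mp hun
        linarith
      calc UTVc f c a s + DTVc f c a s
          = ENNReal.ofReal ((UTVc f c a s).toReal + (DTVc f c a s).toReal) := by
            rw [ENNReal.ofReal_add ENNReal.toReal_nonneg ENNReal.toReal_nonneg,
              ENNReal.ofReal_toReal hus, ENNReal.ofReal_toReal hds]
        _ ≤ ENNReal.ofReal ((TVc f c a s).toReal) := ENNReal.ofReal_le_ofReal hreal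
        _ = TVc f c a s := ENNReal.ofReal_toReal hts
    exact le_trans step1 step2
  · -- lower bound
    rw [TVc_eq_pVar, TVar_eq_pVar]
    refine iSup_le fun n => iSup_le fun t => iSup_le fun hpt => le_trans ?_ (le_pVar hpt)
    refine Finset.sum_le_sum fun i hi => ENNReal.ofReal_le_ofReal ?_
    have hi' := Finset.mem_range.mp hi
    have hstep : t i < t (i + 1) := hpt.2.2 i hi'
    have hta : a ≤ t i := le_trans hpt.1 (part_le hpt (Nat.zero_le i) (by omega))
    have htb : t (i + 1) ≤ b :=
      le_trans (le_trans (part_le hpt (by omega : i + 1 ≤ n) le_rfl) hpt.2.1) hsb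
    have hfu := hufin (t (i + 1)) htb
    have hfd := hdfin (t (i + 1)) htb
    have hb1 := band_real (f := f) hc hta hstep.le hfu hfd
    have hfu' : UTVc (negF f) c a (t (i + 1)) ≠ ⊤ := by rw [UTVc_negF]; exact hfd
    have hfd' : DTVc (negF f) c a (t (i + 1)) ≠ ⊤ := by rw [DTVc_negF]; exact hfu
    have hb2 := band_real (f := negF f) hc hta hstep.le hfu' hfd'
    rw [UTVc_negF, DTVc_negF, UTVc_negF, DTVc_negF] at hb2
    simp only [negF] at hb2
    beta_reduce
    rw [Real.dist_eq, Real.dist_eq]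
    have hA := le_abs_self (((UTVc f c a (t (i + 1))).toReal - (DTVc f c a (t (i + 1))).toReal)
      - ((UTVc f c a (t i)).toReal - (DTVc f c a (t i)).toReal))
    have hB := neg_le_abs (((UTVc f c a (t (i + 1))).toReal - (DTVc f c a (t (i + 1))).toReal)
      - ((UTVc f c a (t i)).toReal - (DTVc f c a (t i)).toReal))
    rcases abs_cases (f (t (i + 1)) - f (t i)) with ⟨he, _⟩ | ⟨he, _⟩ <;> rw [he] <;> linarith
end

section
/- If g : [a,b] → ℝ has finite total variation, |{g(s) − g(u)} − {f(s) − f(u)}| ≤ c for all a ≤ u < s ≤ b, and g = g(a) + g_U − g_D with g_U, g_D : [a,b] → [0,∞) non-decreasing, then g_U(s) ≥ UTV^c(f,[a,s]) and g_D(s) ≥ DTV^c(f,[a,s]) for every s ∈ [a,b]. -/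
open Set Filter

lemma part_mono {a b : ℝ} {n : ℕ} {t : ℕ → ℝ} (hp : IsPart a b n t) :
    ∀ i j, i ≤ j → j ≤ n → t i ≤ t j := by
  intro i j hij hjn
  induction j with
  | zero => simp_all
  | succ k ih =>
    rcases Nat.eq_or_lt_of_le hij with h | h
    · exact h ▸ le_refl _
    · exact (ih (Nat.lt_succ_iff.mp h) (le_of_lt (Nat.lt_of_succ_le hjn))).trans
        (le_of_lt (hp.2.2 k (Nat.lt_of_succ_le hjn)))

lemma sum_le_ofReal {a s : ℝ} {n : ℕ} {t : ℕ → ℝ} (hp : IsPart a s n t)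
    (term : ℕ → ℝ) (φ : ℝ → ℝ) (hφmono : MonotoneOn φ (Set.Icc a s))
    (hφ0 : 0 ≤ φ (t 0))
    (hterm : ∀ i < n, term i ≤ φ (t (i + 1)) - φ (t i)) :
    ∑ i ∈ Finset.range n, ENNReal.ofReal (term i) ≤ ENNReal.ofReal (φ s) := by
  have hmem : ∀ i ≤ n, t i ∈ Set.Icc a s := fun i hi =>
    ⟨hp.1.trans (part_mono hp 0 i (Nat.zero_le _) hi),
     (part_mono hp i n hi le_rfl).trans hp.2.1⟩
  have has : a ≤ s := (hmem 0 (Nat.zero_le _)).1.trans (hmem 0 (Nat.zero_le _)).2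
  calc ∑ i ∈ Finset.range n, ENNReal.ofReal (term i)
      ≤ ∑ i ∈ Finset.range n, ENNReal.ofReal (φ (t (i + 1)) - φ (t i)) := by
        refine Finset.sum_le_sum fun i hi => ENNReal.ofReal_le_ofReal ?_
        exact hterm i (Finset.mem_range.mp hi)
    _ = ENNReal.ofReal (∑ i ∈ Finset.range n, (φ (t (i + 1)) - φ (t i))) := by
        rw [ENNReal.ofReal_sum_of_nonneg]
        intro i hi
        have hi' := Finset.mem_range.mp hi
        have := hφmono (hmem i (le_of_lt hi')) (hmem (i+1) hi')
          (le_of_lt (hp.2.2 i hi'))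
        linarith
    _ = ENNReal.ofReal (φ (t n) - φ (t 0)) := by exact congrArg _ (Finset.sum_range_sub (fun i => φ (t i)) n)
    _ ≤ ENNReal.ofReal (φ s) := by
        refine ENNReal.ofReal_le_ofReal ?_
        have := hφmono (hmem n le_rfl) (Set.right_mem_Icc.mpr has) hp.2.1
        linarith

/-- Any Jordan-type decomposition `g = g(a) + g_U − g_D` of a function `g`
whose increments approximate those of `f` with accuracy `c` dominates
`UTV^c` and `DTV^c`. -/
theorem jordan_dominates (a b : ℝ) (hab : a < b) (f : ℝ → ℝ)
    (hf : Cadlag f a b) (c : ℝ) (hc : 0 < c)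
    (g gU gD : ℝ → ℝ)
    (hgTV : TVar g a b < ⊤)
    (hincr : ∀ u ∈ Set.Icc a b, ∀ s ∈ Set.Icc a b, u < s →
      |(g s - g u) - (f s - f u)| ≤ c)
    (hU : MonotoneOn gU (Set.Icc a b)) (hD : MonotoneOn gD (Set.Icc a b))
    (hU0 : ∀ t ∈ Set.Icc a b, 0 ≤ gU t) (hD0 : ∀ t ∈ Set.Icc a b, 0 ≤ gD t)
    (hdec : ∀ t ∈ Set.Icc a b, g t = g a + gU t - gD t) :
    ∀ s ∈ Set.Icc a b,
      UTVc f c a s ≤ ENNReal.ofReal (gU s) ∧ DTVc f c a s ≤ ENNReal.ofReal (gD s) := by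
  intro s hs
  have hsub : Set.Icc a s ⊆ Set.Icc a b := Set.Icc_subset_Icc le_rfl hs.2
  constructor
  · refine iSup_le fun n => iSup_le fun t => iSup_le fun hp => ?_
    refine sum_le_ofReal hp _ gU (hU.mono hsub) ?_ ?_
    · have hmem : t 0 ∈ Set.Icc a s := ⟨hp.1, (part_mono hp 0 n (Nat.zero_le _) le_rfl).trans hp.2.1⟩
      exact hU0 _ (hsub hmem)
    · intro i hi
      have hmem : ∀ j ≤ n, t j ∈ Set.Icc a b := fun j hj => hsub
        ⟨hp.1.trans (part_mono hp 0 j (Nat.zero_le _) hj),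
         (part_mono hp j n hj le_rfl).trans hp.2.1⟩
      have h1 := hmem i (le_of_lt hi)
      have h2 := hmem (i+1) hi
      have hincr' := hincr (t i) h1 (t (i+1)) h2 (hp.2.2 i hi)
      have hd1 := hdec _ h1
      have hd2 := hdec _ h2
      have hDm := hD h1 h2 (le_of_lt (hp.2.2 i hi))
      have habs := abs_le.mp hincr'
      linarith [habs.1, habs.2]
  · refine iSup_le fun n => iSup_le fun t => iSup_le fun hp => ?_
    refine sum_le_ofReal hp _ gD (hD.mono hsub) ?_ ?_
    · have hmem : t 0 ∈ Set.Icc a s := ⟨hp.1, (part_mono hp 0 n (Nat.zero_le _) le_rfl).trans hp.2.1⟩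
      exact hD0 _ (hsub hmem)
    · intro i hi
      have hmem : ∀ j ≤ n, t j ∈ Set.Icc a b := fun j hj => hsub
        ⟨hp.1.trans (part_mono hp 0 j (Nat.zero_le _) hj),
         (part_mono hp j n hj le_rfl).trans hp.2.1⟩
      have h1 := hmem i (le_of_lt hi)
      have h2 := hmem (i+1) hi
      have hincr' := hincr (t i) h1 (t (i+1)) h2 (hp.2.2 i hi)
      have hd1 := hdec _ h1
      have hd2 := hdec _ h2
      have hUm := hU h1 h2 (le_of_lt (hp.2.2 i hi))
      have habs := abs_le.mp hincr'
      linarith [habs.1, habs.2]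
end

section
/- If g : [a,b] → ℝ has finite total variation, g(a) = 0, increments of g approximate increments of f with accuracy c (|{g(s) − g(u)} − {f(s) − f(u)}| ≤ c for all a ≤ u < s ≤ b), and TV(g,[a,s]) ≤ TV^c(f,[a,s]) for every s ∈ [a,b], then g(s) = UTV^c(f,[a,s]) − DTV^c(f,[a,s]) for all s ∈ [a,b]. -/
open Set Filter

namespace F0cAux

lemma part_mono {a s : ℝ} {n : ℕ} {t : ℕ → ℝ} (h : IsPart a s n t) :
    ∀ {i j : ℕ}, i ≤ j → j ≤ n → t i ≤ t j := by
  intro i j hij hjn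
  induction j with
  | zero => simp_all
  | succ k ih =>
    rcases Nat.eq_or_lt_of_le hij with rfl | hlt
    · exact le_rfl
    · exact le_trans (ih (Nat.lt_succ_iff.mp hlt) (by omega))
        (le_of_lt (h.2.2 k (by omega)))

lemma part_mem {a s : ℝ} {n : ℕ} {t : ℕ → ℝ} (h : IsPart a s n t) {i : ℕ} (hi : i ≤ n) :
    a ≤ t i ∧ t i ≤ s :=
  ⟨le_trans h.1 (part_mono h (Nat.zero_le i) hi),
   le_trans (part_mono h hi le_rfl) h.2.1⟩

noncomputable def PartSum (φ : ℝ → ℝ → ℝ) (n : ℕ) (t : ℕ → ℝ) : ENNReal :=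
  ∑ i ∈ Finset.range n, ENNReal.ofReal (φ (t i) (t (i + 1)))

noncomputable def PSup (a s : ℝ) (φ : ℝ → ℝ → ℝ) : ENNReal :=
  ⨆ (n : ℕ) (t : ℕ → ℝ) (_ : IsPart a s n t), PartSum φ n t

lemma le_PSup {a s : ℝ} {φ : ℝ → ℝ → ℝ} {n : ℕ} {t : ℕ → ℝ} (h : IsPart a s n t) :
    PartSum φ n t ≤ PSup a s φ :=
  le_trans (le_iSup (fun _ : IsPart a s n t => PartSum φ n t) h)
    (le_trans (le_iSup (fun t' => ⨆ _ : IsPart a s n t', PartSum φ n t') t)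
      (le_iSup (fun n' => ⨆ t', ⨆ _ : IsPart a s n' t', PartSum φ n' t') n))

lemma PSup_le {a s : ℝ} {φ : ℝ → ℝ → ℝ} {C : ENNReal}
    (h : ∀ n t, IsPart a s n t → PartSum φ n t ≤ C) : PSup a s φ ≤ C :=
  iSup_le fun n => iSup_le fun t => iSup_le fun hp => h n t hp

lemma PSup_mono_fun {a s : ℝ} {φ ψ : ℝ → ℝ → ℝ}
    (h : ∀ x y, a ≤ x → x < y → y ≤ s → φ x y ≤ ψ x y) :
    PSup a s φ ≤ PSup a s ψ := by
  refine PSup_le fun n t hp => le_trans ?_ (le_PSup hp)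
  refine Finset.sum_le_sum fun i hi => ?_
  rw [Finset.mem_range] at hi
  exact ENNReal.ofReal_le_ofReal
    (h _ _ (part_mem hp (by omega)).1 (hp.2.2 i hi) (part_mem hp (by omega)).2)

lemma PSup_mono_right {a s b : ℝ} {φ : ℝ → ℝ → ℝ} (hsb : s ≤ b) :
    PSup a s φ ≤ PSup a b φ :=
  PSup_le fun n t hp => le_PSup ⟨hp.1, le_trans hp.2.1 hsb, hp.2.2⟩

/-- Extend a partition so that it starts exactly at `a` and ends exactly at `s`,
only increasing every `PartSum`. -/
lemma extend {a s : ℝ} {n : ℕ} {t : ℕ → ℝ} (hp : IsPart a s n t) (has : a ≤ s) :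
    ∃ m u, IsPart a s m u ∧ u 0 = a ∧ u m = s ∧
      ∀ φ : ℝ → ℝ → ℝ, PartSum φ n t ≤ PartSum φ m u := by
  -- step 1 : prepend a
  obtain ⟨m₁, u₁, hp₁, h0₁, he₁, hs₁⟩ :
      ∃ m₁ u₁, IsPart a s m₁ u₁ ∧ u₁ 0 = a ∧ u₁ m₁ = t n ∧
        ∀ φ : ℝ → ℝ → ℝ, PartSum φ n t ≤ PartSum φ m₁ u₁ := by
    rcases eq_or_lt_of_le hp.1 with h | h
    · exact ⟨n, t, hp, h.symm, rfl, fun φ => le_rfl⟩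
    · refine ⟨n + 1, fun i => if i = 0 then a else t (i - 1), ?_, by simp, by simp, ?_⟩
      · refine ⟨by simp, by simpa using hp.2.1, fun i hi => ?_⟩
        rcases Nat.eq_zero_or_pos i with rfl | hpos
        · simpa using h
        · have h1 : i ≠ 0 := by omega
          have h2 : i + 1 ≠ 0 := by omega
          simp only [h1, h2, if_false]
          have := hp.2.2 (i - 1) (by omega)
          have hi1 : i - 1 + 1 = i + 1 - 1 := by omega
          rwa [hi1] at this
      · intro φ
        unfold PartSum
        rw [Finset.sum_range_succ']
        simp only [Nat.succ_sub_one, Nat.add_sub_cancel]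
        have : ∀ i ∈ Finset.range n,
            ENNReal.ofReal (φ (t i) (t (i + 1))) =
            ENNReal.ofReal (φ (if i + 1 = 0 then a else t (i + 1 - 1))
              (if i + 1 + 1 = 0 then a else t (i + 1 + 1 - 1))) := by
          intro i _; simp
        rw [Finset.sum_congr rfl this]
        exact le_add_right le_rfl
  -- step 2 : append s
  rcases eq_or_lt_of_le hp₁.2.1 with h | h
  · exact ⟨m₁, u₁, hp₁, h0₁, h, hs₁⟩
  · refine ⟨m₁ + 1, fun i => if i ≤ m₁ then u₁ i else s, ?_, by simp [h0₁], by simp, ?_⟩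
    · refine ⟨by simpa using hp₁.1, by simp, fun i hi => ?_⟩
      rcases Nat.lt_or_ge i m₁ with hlt | hge
      · have h1 : i ≤ m₁ := by omega
        have h2 : i + 1 ≤ m₁ := by omega
        simp only [h1, h2, if_true]
        exact hp₁.2.2 i hlt
      · have hi' : i = m₁ := by omega
        simp only [hi']
        rw [if_pos le_rfl, if_neg (by omega : ¬ m₁ + 1 ≤ m₁)]
        exact h
    · intro φ
      refine le_trans (hs₁ φ) ?_
      unfold PartSum
      rw [Finset.sum_range_succ]
      have : ∀ i ∈ Finset.range m₁,
          ENNReal.ofReal (φ (u₁ i) (u₁ (i + 1))) =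
          ENNReal.ofReal (φ (if i ≤ m₁ then u₁ i else s)
            (if i + 1 ≤ m₁ then u₁ (i + 1) else s)) := by
        intro i hi
        rw [Finset.mem_range] at hi
        have h1 : i ≤ m₁ := by omega
        have h2 : i + 1 ≤ m₁ := by omega
        simp [h1, h2]
      rw [Finset.sum_congr rfl this]
      exact le_add_right le_rfl

end F0cAux

namespace F0cAux

lemma ofReal_max_zero (d : ℝ) : ENNReal.ofReal (max d 0) = ENNReal.ofReal d := by
  rcases le_total 0 d with h | h
  · rw [max_eq_left h]
  · rw [max_eq_right h, ENNReal.ofReal_of_nonpos h, ENNReal.ofReal_zero]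

lemma key_sums (g : ℝ → ℝ) {a s : ℝ} {m : ℕ} {u : ℕ → ℝ}
    (_ : IsPart a s m u) (h0 : u 0 = a) (he : u m = s) :
    ∃ A B : ℝ, 0 ≤ A ∧ 0 ≤ B ∧ A - B = g s - g a ∧
      PartSum (fun x y => g y - g x) m u = ENNReal.ofReal A ∧
      PartSum (fun x y => g x - g y) m u = ENNReal.ofReal B ∧
      PartSum (fun x y => dist (g y) (g x)) m u = ENNReal.ofReal (A + B) := by
  refine ⟨∑ i ∈ Finset.range m, max (g (u (i + 1)) - g (u i)) 0,
          ∑ i ∈ Finset.range m, max (g (u i) - g (u (i + 1))) 0,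
          Finset.sum_nonneg fun i _ => le_max_right _ _,
          Finset.sum_nonneg fun i _ => le_max_right _ _, ?_, ?_, ?_, ?_⟩
  · rw [← Finset.sum_sub_distrib]
    have : ∀ i ∈ Finset.range m,
        max (g (u (i + 1)) - g (u i)) 0 - max (g (u i) - g (u (i + 1))) 0
          = g (u (i + 1)) - g (u i) := by
      intro i _
      rcases le_total (g (u i)) (g (u (i + 1))) with h | h
      · rw [max_eq_left (by linarith), max_eq_right (by linarith)]; ring
      · rw [max_eq_right (by linarith), max_eq_left (by linarith)]; ring
    rw [Finset.sum_congr rfl this, Finset.sum_range_sub (fun i => g (u i)), h0, he]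
  · rw [ENNReal.ofReal_sum_of_nonneg fun i _ => le_max_right _ _]
    exact Finset.sum_congr rfl fun i _ => (ofReal_max_zero _).symm
  · rw [ENNReal.ofReal_sum_of_nonneg fun i _ => le_max_right _ _]
    exact Finset.sum_congr rfl fun i _ => (ofReal_max_zero _).symm
  · rw [← Finset.sum_add_distrib,
      ENNReal.ofReal_sum_of_nonneg fun i _ =>
        add_nonneg (le_max_right _ _) (le_max_right _ _)]
    refine Finset.sum_congr rfl fun i _ => ?_
    simp only []
    rw [Real.dist_eq]
    rcases le_total (g (u i)) (g (u (i + 1))) with h | h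
    · rw [abs_of_nonneg (by linarith), max_eq_left (by linarith),
        max_eq_right (by linarith), add_zero]
    · rw [abs_of_nonpos (by linarith), max_eq_right (by linarith),
        max_eq_left (by linarith), zero_add, neg_sub]

end F0cAux

open F0cAux in
/-- Uniqueness of `f^{0,c}`: if `g(a) = 0`, the increments of `g`
approximate those of `f` with accuracy `c`, `g` has finite total variation, and
`TV(g,[a,s]) ≤ TV^c(f,[a,s])` for every `s`, then `g = UTV^c − DTV^c`. -/
theorem f0c_unique (a b : ℝ) (hab : a < b) (f : ℝ → ℝ)
    (hf : Cadlag f a b) (c : ℝ) (hc : 0 < c)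
    (g : ℝ → ℝ) (hga : g a = 0)
    (hgTV : TVar g a b < ⊤)
    (hincr : ∀ u ∈ Set.Icc a b, ∀ s ∈ Set.Icc a b, u < s →
      |(g s - g u) - (f s - f u)| ≤ c)
    (hopt : ∀ s ∈ Set.Icc a b, TVar g a s ≤ TVc f c a s) :
    ∀ s ∈ Set.Icc a b, g s = (UTVc f c a s).toReal - (DTVc f c a s).toReal := by
  intro s hs
  obtain ⟨has, hsb⟩ := hs
  have hTVar : ∀ r : ℝ, TVar g a r = PSup a r (fun x y => dist (g y) (g x)) := fun _ => rfl
  have hTVc : TVc f c a s = PSup a s (fun x y => dist (f y) (f x) - c) := rfl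
  have hUTVc : UTVc f c a s = PSup a s (fun x y => f y - f x - c) := rfl
  have hDTVc : DTVc f c a s = PSup a s (fun x y => f x - f y - c) := rfl
  set U := PSup a s (fun x y => g y - g x) with hU
  set D := PSup a s (fun x y => g x - g y) with hD
  have hPfin : TVar g a s < ⊤ := by
    refine lt_of_le_of_lt ?_ hgTV
    rw [hTVar s, hTVar b]
    exact PSup_mono_right hsb
  have hU_le_P : U ≤ TVar g a s := by
    rw [hTVar s, hU]
    refine PSup_mono_fun fun x y _ _ _ => ?_
    rw [Real.dist_eq]; exact le_abs_self _
  have hD_le_P : D ≤ TVar g a s := by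
    rw [hTVar s, hD]
    refine PSup_mono_fun fun x y _ _ _ => ?_
    rw [Real.dist_eq, abs_sub_comm]; exact le_abs_self _
  have hUfin : U ≠ ⊤ := (lt_of_le_of_lt hU_le_P hPfin).ne
  have hDfin : D ≠ ⊤ := (lt_of_le_of_lt hD_le_P hPfin).ne
  have hmem : ∀ x : ℝ, a ≤ x → x ≤ s → x ∈ Set.Icc a b :=
    fun x h1 h2 => ⟨h1, le_trans h2 hsb⟩
  have hUcU : UTVc f c a s ≤ U := by
    rw [hUTVc, hU]
    refine PSup_mono_fun fun x y hax hxy hys => ?_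
    have h := abs_le.mp (hincr x (hmem x hax (le_of_lt (lt_of_lt_of_le hxy hys)))
      y (hmem y (le_trans hax (le_of_lt hxy)) hys) hxy)
    linarith [h.1]
  have hDcD : DTVc f c a s ≤ D := by
    rw [hDTVc, hD]
    refine PSup_mono_fun fun x y hax hxy hys => ?_
    have h := abs_le.mp (hincr x (hmem x hax (le_of_lt (lt_of_lt_of_le hxy hys)))
      y (hmem y (le_trans hax (le_of_lt hxy)) hys) hxy)
    linarith [h.2]
  have hTc_le : TVc f c a s ≤ UTVc f c a s + DTVc f c a s := by
    rw [hTVc, hUTVc, hDTVc]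
    refine PSup_le fun n t hp => ?_
    have heq : PartSum (fun x y => dist (f y) (f x) - c) n t
        = PartSum (fun x y => f y - f x - c) n t + PartSum (fun x y => f x - f y - c) n t := by
      unfold PartSum
      rw [← Finset.sum_add_distrib]
      refine Finset.sum_congr rfl fun i _ => ?_
      simp only []
      rw [Real.dist_eq]
      rcases le_total (f (t i)) (f (t (i + 1))) with h | h
      · rw [abs_of_nonneg (by linarith),
          ENNReal.ofReal_of_nonpos (by linarith : f (t i) - f (t (i + 1)) - c ≤ 0), add_zero]
      · rw [abs_of_nonpos (by linarith),
          ENNReal.ofReal_of_nonpos (by linarith : f (t (i + 1)) - f (t i) - c ≤ 0), zero_add,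
          neg_sub]
    rw [heq]
    exact add_le_add (le_PSup hp) (le_PSup hp)
  have htriv : IsPart a s 0 (fun _ => a) := ⟨le_rfl, has, by omega⟩
  have hUD_le_P : U + D ≤ TVar g a s := by
    rw [hTVar s, hU, hD]
    rw [show PSup a s (fun x y => g y - g x)
        = ⨆ (p : ℕ × (ℕ → ℝ)), ⨆ (_ : IsPart a s p.1 p.2), PartSum (fun x y => g y - g x) p.1 p.2
      from by rw [iSup_prod]; rfl,
      show PSup a s (fun x y => g x - g y)
        = ⨆ (p : ℕ × (ℕ → ℝ)), ⨆ (_ : IsPart a s p.1 p.2), PartSum (fun x y => g x - g y) p.1 p.2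
      from by rw [iSup_prod]; rfl]
    refine ENNReal.biSup_add_biSup_le' ⟨(0, fun _ => a), htriv⟩ ⟨(0, fun _ => a), htriv⟩ ?_
    rintro ⟨n, t⟩ hp ⟨m, u⟩ hq
    obtain ⟨n', t', hp', h0p, hep, hsp⟩ := extend hp has
    obtain ⟨m', u', hq', h0q, heq', hsq⟩ := extend hq has
    obtain ⟨A1, B1, hA1, hB1, hAB1, hPU1, hPD1, hPV1⟩ := key_sums g hp' h0p hep
    obtain ⟨A2, B2, hA2, hB2, hAB2, hPU2, hPD2, hPV2⟩ := key_sums g hq' h0q heq'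
    refine le_trans (add_le_add (hsp _) (hsq _)) ?_
    rw [hPU1, hPD2, ← ENNReal.ofReal_add hA1 hB2]
    rcases le_total (A1 + B1) (A2 + B2) with h | h
    · exact le_trans (ENNReal.ofReal_le_ofReal (by linarith)) (hPV2 ▸ le_PSup hq')
    · exact le_trans (ENNReal.ofReal_le_ofReal (by linarith)) (hPV1 ▸ le_PSup hp')
  have hsum_eq : U + D = UTVc f c a s + DTVc f c a s :=
    le_antisymm (le_trans hUD_le_P (le_trans (hopt s ⟨has, hsb⟩) hTc_le))
      (add_le_add hUcU hDcD)
  have hDeq : D = DTVc f c a s := by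
    refine le_antisymm ?_ hDcD
    have h1 : U + D ≤ U + DTVc f c a s := by
      rw [hsum_eq]; exact add_le_add_left hUcU _
    exact (ENNReal.add_le_add_iff_left hUfin).mp h1
  have hUeq : U = UTVc f c a s := by
    refine le_antisymm ?_ hUcU
    have h1 : D + U ≤ D + UTVc f c a s := by
      have h2 : U + D ≤ UTVc f c a s + D := by
        rw [hsum_eq]; exact add_le_add_right hDcD _
      rwa [add_comm U D, add_comm (UTVc f c a s) D] at h2
    exact (ENNReal.add_le_add_iff_left hDfin).mp h1
  -- the two-point partition lemmas
  have hpart2 : a < s → IsPart a s 1 (fun i => if i = 0 then a else s) := by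
    intro h
    refine ⟨by simp, by simp, fun i hi => ?_⟩
    interval_cases i
    simpa using h
  have hDlow : g a - g s ≤ D.toReal := by
    rcases eq_or_lt_of_le has with rfl | h
    · simpa using ENNReal.toReal_nonneg
    · have hle : ENNReal.ofReal (g a - g s) ≤ D := by
        rw [hD]
        have := le_PSup (φ := fun x y => g x - g y) (hpart2 h)
        simpa [PartSum, Finset.sum_range_one] using this
      have := (ENNReal.ofReal_le_iff_le_toReal hDfin).mp hle
      linarith
  have hUlow : g s - g a ≤ U.toReal := by
    rcases eq_or_lt_of_le has with rfl | h
    · simpa using ENNReal.toReal_nonneg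
    · have hle : ENNReal.ofReal (g s - g a) ≤ U := by
        rw [hU]
        have := le_PSup (φ := fun x y => g y - g x) (hpart2 h)
        simpa [PartSum, Finset.sum_range_one] using this
      have := (ENNReal.ofReal_le_iff_le_toReal hUfin).mp hle
      linarith
  have hUval : U.toReal ≤ D.toReal + (g s - g a) := by
    have h1 : U ≤ ENNReal.ofReal (D.toReal + (g s - g a)) := by
      rw [hU]
      refine PSup_le fun n t hp => ?_
      obtain ⟨n', t', hp', h0p, hep, hsp⟩ := extend hp has
      obtain ⟨A, B, hA, hB, hAB, hPU, hPD, _⟩ := key_sums g hp' h0p hep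
      refine le_trans (hsp _) ?_
      rw [hPU]
      refine ENNReal.ofReal_le_ofReal ?_
      have hBD : B ≤ D.toReal :=
        (ENNReal.ofReal_le_iff_le_toReal hDfin).mp (hPD ▸ (hD ▸ le_PSup hp'))
      linarith
    exact ENNReal.toReal_le_of_le_ofReal (by linarith [hDlow]) h1
  have hDval : D.toReal ≤ U.toReal + (g a - g s) := by
    have h1 : D ≤ ENNReal.ofReal (U.toReal + (g a - g s)) := by
      rw [hD]
      refine PSup_le fun n t hp => ?_
      obtain ⟨n', t', hp', h0p, hep, hsp⟩ := extend hp has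
      obtain ⟨A, B, hA, hB, hAB, hPU, hPD, _⟩ := key_sums g hp' h0p hep
      refine le_trans (hsp _) ?_
      rw [hPD]
      refine ENNReal.ofReal_le_ofReal ?_
      have hAU : A ≤ U.toReal :=
        (ENNReal.ofReal_le_iff_le_toReal hUfin).mp (hPU ▸ (hU ▸ le_PSup hp'))
      linarith
    exact ENNReal.toReal_le_of_le_ofReal (by linarith [hUlow]) h1
  rw [← hUeq, ← hDeq]
  linarith [hUval, hDval]
end

section
/- For any càdlàg function f : [a,b] → ℝ, the map c ↦ UTV^c(f,[a,b]) on (0,∞) is non-increasing and convex (hence continuous). -/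
open Set Filter

/-- There is a partition of `[a, x]` into finitely many intervals, on each of which
(half-open) the oscillation of `f` is at most `ε`. -/
def OscPart (f : ℝ → ℝ) (ε a x : ℝ) : Prop :=
  ∃ (k : ℕ) (s : ℕ → ℝ), s 0 = a ∧ s k = x ∧ (∀ j < k, s j < s (j + 1)) ∧
    ∀ j < k, ∀ u v, s j ≤ u → u < s (j + 1) → s j ≤ v → v < s (j + 1) → |f u - f v| ≤ ε

lemma oscPart_self (f : ℝ → ℝ) (ε a : ℝ) : OscPart f ε a a :=
  ⟨0, fun _ => a, rfl, rfl, fun j hj => (Nat.not_lt_zero j hj).elim,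
    fun j hj => (Nat.not_lt_zero j hj).elim⟩

lemma OscPart.extend {f : ℝ → ℝ} {ε a x y : ℝ} (h : OscPart f ε a x) (hxy : x < y)
    (hosc : ∀ u v, x ≤ u → u < y → x ≤ v → v < y → |f u - f v| ≤ ε) :
    OscPart f ε a y := by
  obtain ⟨k, s, hs0, hsk, hmono, hoscs⟩ := h
  set s' : ℕ → ℝ := fun j => if j = k + 1 then y else s j with hs'
  have hs'j : ∀ j, j ≤ k → s' j = s j := fun j hj => if_neg (by omega)
  have hs'top : s' (k + 1) = y := if_pos rfl
  refine ⟨k + 1, s', by rw [hs'j 0 (Nat.zero_le k), hs0], hs'top, ?_, ?_⟩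
  · intro j hj
    by_cases hjk : j = k
    · rw [hjk, hs'j k le_rfl, hs'top, hsk]
      exact hxy
    · have hjk' : j < k := by omega
      rw [hs'j j (by omega), hs'j (j + 1) (by omega)]
      exact hmono j hjk'
  · intro j hj u v hu1 hu2 hv1 hv2
    by_cases hjk : j = k
    · rw [hjk] at hu1 hu2 hv1 hv2
      rw [hs'j k le_rfl, hsk] at hu1 hv1
      rw [hs'top] at hu2 hv2
      exact hosc u v hu1 hu2 hv1 hv2
    · have hjk' : j < k := by omega
      rw [hs'j j (by omega)] at hu1 hv1
      rw [hs'j (j + 1) (by omega)] at hu2 hv2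
      exact hoscs j hjk' u v hu1 hu2 hv1 hv2

/-- Key càdlàg fact: for every `ε > 0` there is a finite partition of `[a, b]` into
half-open intervals on each of which the oscillation of `f` is at most `ε`. -/
lemma cadlag_oscPart (a b : ℝ) (hab : a ≤ b) (f : ℝ → ℝ) (hf : Cadlag f a b)
    {ε : ℝ} (hε : 0 < ε) : OscPart f ε a b := by
  set A : Set ℝ := {x | x ∈ Set.Icc a b ∧ OscPart f ε a x} with hA
  have haA : a ∈ A := ⟨⟨le_refl a, hab⟩, oscPart_self f ε a⟩
  have hne : A.Nonempty := ⟨a, haA⟩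
  have hbdd : BddAbove A := ⟨b, fun x hx => hx.1.2⟩
  set m := sSup A with hm
  have hma : a ≤ m := le_csSup hbdd haA
  have hmb : m ≤ b := csSup_le hne fun x hx => hx.1.2
  have hmA : OscPart f ε a m := by
    rcases eq_or_lt_of_le hma with h | h
    · exact h ▸ oscPart_self f ε a
    · obtain ⟨l, hl⟩ := hf.2 m ⟨h, hmb⟩
      rw [Metric.tendsto_nhdsWithin_nhds] at hl
      obtain ⟨δ, hδ, hδ'⟩ := hl (ε / 2) (by linarith)
      have hmax : max (m - δ) a < m := max_lt (by linarith) h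
      obtain ⟨x, hxA, hx⟩ := exists_lt_of_lt_csSup hne hmax
      have hxm : x ≤ m := le_csSup hbdd hxA
      rcases eq_or_lt_of_le hxm with he | he
      · exact he ▸ hxA.2
      · refine hxA.2.extend he fun u v hu1 hu2 hv1 hv2 => ?_
        have hxu : max (m - δ) a < u := lt_of_lt_of_le hx hu1
        have hxv : max (m - δ) a < v := lt_of_lt_of_le hx hv1
        have hu : dist (f u) l < ε / 2 := by
          refine hδ' (Set.mem_Iio.mpr hu2) ?_
          rw [Real.dist_eq, abs_sub_lt_iff]
          constructor
          · linarith
          · have := lt_of_le_of_lt (le_max_left (m - δ) a) hxu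
            linarith
        have hv : dist (f v) l < ε / 2 := by
          refine hδ' (Set.mem_Iio.mpr hv2) ?_
          rw [Real.dist_eq, abs_sub_lt_iff]
          constructor
          · linarith
          · have := lt_of_le_of_lt (le_max_left (m - δ) a) hxv
            linarith
        calc |f u - f v| = dist (f u) (f v) := (Real.dist_eq _ _).symm
          _ ≤ dist (f u) l + dist (f v) l := dist_triangle_right _ _ _
          _ ≤ ε := by linarith
  have hmbe : m = b := by
    by_contra hne'
    have hlt : m < b := lt_of_le_of_ne hmb hne'
    have hrc := hf.1 m ⟨hma, hlt⟩
    rw [Metric.tendsto_nhdsWithin_nhds] at hrc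
    obtain ⟨δ, hδ, hδ'⟩ := hrc (ε / 2) (by linarith)
    set y := min (m + δ / 2) b with hy
    have hmy : m < y := lt_min (by linarith) hlt
    have key : ∀ u, m ≤ u → u < y → dist (f u) (f m) < ε / 2 := by
      intro u h1 h2
      rcases eq_or_lt_of_le h1 with rfl | h1'
      · simpa using half_pos hε
      · refine hδ' (Set.mem_Ioi.mpr h1') ?_
        rw [Real.dist_eq, abs_sub_lt_iff]
        have : u < m + δ / 2 := lt_of_lt_of_le h2 (min_le_left _ _)
        constructor <;> linarith
    have hyA : y ∈ A := by
      refine ⟨⟨by linarith, min_le_right _ _⟩, hmA.extend hmy fun u v hu1 hu2 hv1 hv2 => ?_⟩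
      have hu := key u hu1 hu2
      have hv := key v hv1 hv2
      calc |f u - f v| = dist (f u) (f v) := (Real.dist_eq _ _).symm
        _ ≤ dist (f u) (f m) + dist (f v) (f m) := dist_triangle_right _ _ _
        _ ≤ ε := by linarith
    exact absurd (le_csSup hbdd hyA) (not_le.mpr hmy)
  exact hmbe ▸ hmA

/-- For a càdlàg function and `c > 0`, the upward truncated variation is finite. -/
lemma utvc_ne_top (a b : ℝ) (hab : a ≤ b) (f : ℝ → ℝ) (hf : Cadlag f a b)
    {c : ℝ} (hc : 0 < c) : UTVc f c a b ≠ ⊤ := by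
  classical
  obtain ⟨k, s, hs0, hsk, hmono, hosc⟩ := cadlag_oscPart a b hab f hf hc
  set g : ℝ → ℕ := fun x => Nat.findGreatest (fun j => s j ≤ x) k with hg
  have hg_le : ∀ x, g x ≤ k := fun x => Nat.findGreatest_le k
  have hg_spec : ∀ x, a ≤ x → s (g x) ≤ x := fun x hx =>
    Nat.findGreatest_spec (P := fun j => s j ≤ x) (Nat.zero_le k) (show s 0 ≤ x by rw [hs0]; exact hx)
  have hg_gt : ∀ x m, g x < m → m ≤ k → x < s m := fun x m h1 h2 =>
    not_le.mp (Nat.findGreatest_is_greatest (P := fun j => s j ≤ x) h1 h2)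
  have hg_mono : ∀ x y, a ≤ x → x ≤ y → g x ≤ g y := fun x y hx hxy =>
    Nat.le_findGreatest (P := fun j => s j ≤ y) (hg_le x) (le_trans (hg_spec x hx) hxy)
  set M : ℝ := (Finset.range (k + 1)).sup' (by simp) (fun j => |f (s j)|) + c with hM
  have hsup : ∀ j ≤ k, |f (s j)| ≤ (Finset.range (k + 1)).sup' (by simp) (fun j => |f (s j)|) :=
    fun j hj => Finset.le_sup' (fun j => |f (s j)|) (Finset.mem_range.mpr (Nat.lt_succ_of_le hj))
  have hbound : ∀ x, a ≤ x → x ≤ b → |f x| ≤ M := by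
    intro x hax hxb
    have h1 : s (g x) ≤ x := hg_spec x hax
    rcases eq_or_lt_of_le (hg_le x) with he | hlt
    · have hxb' : x = b := le_antisymm hxb (by rw [← hsk, ← he]; exact h1)
      rw [hxb', ← hsk]
      have := hsup k le_rfl
      rw [hM]; linarith
    · have h2 : x < s (g x + 1) := hg_gt x (g x + 1) (Nat.lt_succ_self _) hlt
      have h3 : s (g x) < s (g x + 1) := hmono _ hlt
      have h4 := hosc (g x) hlt x (s (g x)) h1 h2 (le_refl _) h3
      have h5 := hsup (g x) (hg_le x)
      have h6 : |f x| ≤ |f x - f (s (g x))| + |f (s (g x))| := by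
        have := abs_add_le (f x - f (s (g x))) (f (s (g x)))
        simpa using this
      rw [hM]; linarith
  have hbnd : UTVc f c a b ≤ (k : ENNReal) * ENNReal.ofReal (2 * M) := by
    refine iSup_le fun n => iSup_le fun t => iSup_le fun ht => ?_
    obtain ⟨hta, htb, htm⟩ := ht
    have hchain : ∀ j, j ≤ n → ∀ i, i ≤ j → t i ≤ t j := by
      intro j
      induction j with
      | zero => intro _ i hi; rw [Nat.le_zero.mp hi]
      | succ p ih =>
        intro hp i hi
        rcases eq_or_lt_of_le hi with h | h
        · rw [h]
        · exact le_trans (ih (by omega) i (by omega)) (htm p (by omega)).le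
    have htmem : ∀ i, i ≤ n → a ≤ t i ∧ t i ≤ b := fun i hi =>
      ⟨le_trans hta (hchain i hi 0 (Nat.zero_le i)), le_trans (hchain n le_rfl i hi) htb⟩
    set S := (Finset.range n).filter (fun i => g (t i) < g (t (i + 1))) with hS
    have hSsub : S ⊆ Finset.range n := Finset.filter_subset _ _
    have hzero : ∀ i ∈ Finset.range n, i ∉ S →
        ENNReal.ofReal (f (t (i + 1)) - f (t i) - c) = 0 := by
      intro i hi hiS
      have hin : i < n := Finset.mem_range.mp hi
      have hnlt : ¬ g (t i) < g (t (i + 1)) := by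
        intro hcon
        exact hiS (Finset.mem_filter.mpr ⟨hi, hcon⟩)
      have heq : g (t i) = g (t (i + 1)) :=
        le_antisymm (hg_mono _ _ (htmem i hin.le).1 (htm i hin).le) (not_lt.mp hnlt)
      rw [ENNReal.ofReal_eq_zero]
      rcases eq_or_lt_of_le (hg_le (t i)) with he | hlt
      · -- g (t i) = k forces t i = b, contradicting t i < t (i+1) ≤ b
        exfalso
        have h1 : s (g (t i)) ≤ t i := hg_spec _ (htmem i hin.le).1
        rw [← he] at hsk
        rw [hsk] at h1
        have := (htmem (i + 1) hin).2
        have := htm i hin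
        linarith
      · have h1 : s (g (t i)) ≤ t i := hg_spec _ (htmem i hin.le).1
        have h2 : t (i + 1) < s (g (t i) + 1) := by
          refine hg_gt (t (i + 1)) (g (t i) + 1) ?_ hlt
          omega
        have h3 : t i < t (i + 1) := htm i hin
        have h4 := hosc (g (t i)) hlt (t (i + 1)) (t i)
          (le_trans h1 h3.le) h2 h1 (lt_trans h3 h2)
        have := abs_le.mp h4
        linarith [this.2]
    have hcard : S.card ≤ k := by
      have h1 : (S.card : ℤ) ≤ ∑ i ∈ S, ((g (t (i + 1)) : ℤ) - g (t i)) := by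
        have h0 : (S.card : ℤ) = ∑ _i ∈ S, (1 : ℤ) := by simp
        rw [h0]
        refine Finset.sum_le_sum fun i hi => ?_
        have := (Finset.mem_filter.mp hi).2
        omega
      have h2 : ∑ i ∈ S, ((g (t (i + 1)) : ℤ) - g (t i)) ≤
          ∑ i ∈ Finset.range n, ((g (t (i + 1)) : ℤ) - g (t i)) := by
        refine Finset.sum_le_sum_of_subset_of_nonneg hSsub fun i hi _ => ?_
        have hin : i < n := Finset.mem_range.mp hi
        have := hg_mono (t i) (t (i + 1)) (htmem i hin.le).1 (htm i hin).le
        omega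
      rw [Finset.sum_range_sub (fun i => (g (t i) : ℤ))] at h2
      have h3 := hg_le (t n)
      omega
    calc ∑ i ∈ Finset.range n, ENNReal.ofReal (f (t (i + 1)) - f (t i) - c)
        = ∑ i ∈ S, ENNReal.ofReal (f (t (i + 1)) - f (t i) - c) :=
          (Finset.sum_subset hSsub hzero).symm
      _ ≤ ∑ _i ∈ S, ENNReal.ofReal (2 * M) := by
          refine Finset.sum_le_sum fun i hi => ?_
          apply ENNReal.ofReal_le_ofReal
          have hi' : i < n := Finset.mem_range.mp (hSsub hi)
          have b1 := abs_le.mp (hbound (t i) (htmem i hi'.le).1 (htmem i hi'.le).2)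
          have b2 := abs_le.mp (hbound (t (i + 1)) (htmem (i + 1) hi').1 (htmem (i + 1) hi').2)
          linarith [b1.1, b2.2]
      _ = (S.card : ENNReal) * ENNReal.ofReal (2 * M) := by
          rw [Finset.sum_const, nsmul_eq_mul]
      _ ≤ (k : ENNReal) * ENNReal.ofReal (2 * M) :=
          mul_le_mul_left (Nat.cast_le.mpr hcard) _
  exact ne_top_of_le_ne_top
    (ENNReal.mul_ne_top (ENNReal.natCast_ne_top k) ENNReal.ofReal_ne_top) hbnd

lemma utvc_anti (f : ℝ → ℝ) (a b : ℝ) {c d : ℝ} (hcd : c ≤ d) :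
    UTVc f d a b ≤ UTVc f c a b := by
  refine iSup_mono fun n => iSup_mono fun t => iSup_mono fun ht =>
    Finset.sum_le_sum fun i _ => ?_
  exact ENNReal.ofReal_le_ofReal (by linarith)

lemma ofReal_max0 (r : ℝ) : ENNReal.ofReal (max r 0) = ENNReal.ofReal r := by
  rcases le_total r 0 with h | h
  · rw [max_eq_right h]
    simp [ENNReal.ofReal_eq_zero.mpr h]
  · rw [max_eq_left h]

lemma ofReal_comb (d x y θ μ : ℝ) (hθ : 0 ≤ θ) (hμ : 0 ≤ μ) (hθμ : θ + μ = 1) :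
    ENNReal.ofReal (d - (θ * x + μ * y)) ≤
      ENNReal.ofReal θ * ENNReal.ofReal (d - x) + ENNReal.ofReal μ * ENNReal.ofReal (d - y) := by
  have h1 : d - (θ * x + μ * y) ≤ θ * max (d - x) 0 + μ * max (d - y) 0 := by
    have hx := le_max_left (d - x) 0
    have hy := le_max_left (d - y) 0
    have hd : θ * (d - x) + μ * (d - y) = d - (θ * x + μ * y) := by
      linear_combination d * hθμ
    nlinarith [mul_le_mul_of_nonneg_left hx hθ, mul_le_mul_of_nonneg_left hy hμ]
  calc ENNReal.ofReal (d - (θ * x + μ * y))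
      ≤ ENNReal.ofReal (θ * max (d - x) 0 + μ * max (d - y) 0) := ENNReal.ofReal_le_ofReal h1
    _ = ENNReal.ofReal (θ * max (d - x) 0) + ENNReal.ofReal (μ * max (d - y) 0) := by
        rw [ENNReal.ofReal_add (by positivity) (by positivity)]
    _ = ENNReal.ofReal θ * ENNReal.ofReal (max (d - x) 0) +
        ENNReal.ofReal μ * ENNReal.ofReal (max (d - y) 0) := by
        rw [ENNReal.ofReal_mul hθ, ENNReal.ofReal_mul hμ]
    _ = ENNReal.ofReal θ * ENNReal.ofReal (d - x) + ENNReal.ofReal μ * ENNReal.ofReal (d - y) := by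
        rw [ofReal_max0, ofReal_max0]

lemma utvc_comb (f : ℝ → ℝ) (a b : ℝ) {x y θ μ : ℝ} (hθ : 0 ≤ θ) (hμ : 0 ≤ μ)
    (hθμ : θ + μ = 1) :
    UTVc f (θ * x + μ * y) a b ≤
      ENNReal.ofReal θ * UTVc f x a b + ENNReal.ofReal μ * UTVc f y a b := by
  refine iSup_le fun n => iSup_le fun t => iSup_le fun ht => ?_
  have hle1 : ∑ i ∈ Finset.range n, ENNReal.ofReal (f (t (i + 1)) - f (t i) - x) ≤
      UTVc f x a b := le_iSup_of_le n (le_iSup_of_le t (le_iSup_of_le ht le_rfl))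
  have hle2 : ∑ i ∈ Finset.range n, ENNReal.ofReal (f (t (i + 1)) - f (t i) - y) ≤
      UTVc f y a b := le_iSup_of_le n (le_iSup_of_le t (le_iSup_of_le ht le_rfl))
  calc ∑ i ∈ Finset.range n, ENNReal.ofReal (f (t (i + 1)) - f (t i) - (θ * x + μ * y))
      ≤ ∑ i ∈ Finset.range n,
          (ENNReal.ofReal θ * ENNReal.ofReal (f (t (i + 1)) - f (t i) - x) +
           ENNReal.ofReal μ * ENNReal.ofReal (f (t (i + 1)) - f (t i) - y)) :=
        Finset.sum_le_sum fun i _ => ofReal_comb _ x y θ μ hθ hμ hθμ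
    _ = ENNReal.ofReal θ * ∑ i ∈ Finset.range n, ENNReal.ofReal (f (t (i + 1)) - f (t i) - x) +
        ENNReal.ofReal μ * ∑ i ∈ Finset.range n, ENNReal.ofReal (f (t (i + 1)) - f (t i) - y) := by
        rw [Finset.sum_add_distrib, Finset.mul_sum, Finset.mul_sum]
    _ ≤ ENNReal.ofReal θ * UTVc f x a b + ENNReal.ofReal μ * UTVc f y a b :=
        add_le_add (mul_le_mul_right hle1 _) (mul_le_mul_right hle2 _)

/-- `c ↦ UTV^c(f,[a,b])` is non-increasing and convex on `(0, ∞)`,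
hence continuous. -/
theorem utvc_antitone_convex (a b : ℝ) (hab : a < b) (f : ℝ → ℝ)
    (hf : Cadlag f a b) :
    AntitoneOn (fun c => (UTVc f c a b).toReal) (Set.Ioi (0 : ℝ)) ∧
    ConvexOn ℝ (Set.Ioi (0 : ℝ)) (fun c => (UTVc f c a b).toReal) ∧
    ContinuousOn (fun c => (UTVc f c a b).toReal) (Set.Ioi (0 : ℝ)) := by
  have hfin : ∀ {c : ℝ}, 0 < c → UTVc f c a b ≠ ⊤ := fun hc =>
    utvc_ne_top a b hab.le f hf hc
  have hanti : AntitoneOn (fun c => (UTVc f c a b).toReal) (Set.Ioi (0 : ℝ)) := by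
    intro c₁ h₁ c₂ _ h12
    exact ENNReal.toReal_mono (hfin h₁) (utvc_anti f a b h12)
  have hconv : ConvexOn ℝ (Set.Ioi (0 : ℝ)) (fun c => (UTVc f c a b).toReal) := by
    refine ⟨convex_Ioi 0, fun x hx y hy θ μ hθ hμ hθμ => ?_⟩
    have hx' : (0 : ℝ) < x := hx
    have hy' : (0 : ℝ) < y := hy
    have hcomb : 0 < θ * x + μ * y := by
      rcases hθ.eq_or_lt with h | h
      · nlinarith
      · nlinarith [mul_pos h hx', mul_nonneg hμ hy'.le]
    have key := utvc_comb f a b (x := x) (y := y) hθ hμ hθμ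
    have hfx := hfin hx'
    have hfy := hfin hy'
    have hrhs : ENNReal.ofReal θ * UTVc f x a b + ENNReal.ofReal μ * UTVc f y a b ≠ ⊤ :=
      ENNReal.add_ne_top.mpr ⟨ENNReal.mul_ne_top ENNReal.ofReal_ne_top hfx,
        ENNReal.mul_ne_top ENNReal.ofReal_ne_top hfy⟩
    have h1 : (UTVc f (θ * x + μ * y) a b).toReal ≤
        (ENNReal.ofReal θ * UTVc f x a b + ENNReal.ofReal μ * UTVc f y a b).toReal :=
      ENNReal.toReal_mono hrhs key
    have h2 : (ENNReal.ofReal θ * UTVc f x a b + ENNReal.ofReal μ * UTVc f y a b).toReal =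
        θ * (UTVc f x a b).toReal + μ * (UTVc f y a b).toReal := by
      rw [ENNReal.toReal_add (ENNReal.mul_ne_top ENNReal.ofReal_ne_top hfx)
        (ENNReal.mul_ne_top ENNReal.ofReal_ne_top hfy), ENNReal.toReal_mul,
        ENNReal.toReal_mul, ENNReal.toReal_ofReal hθ, ENNReal.toReal_ofReal hμ]
    simpa [smul_eq_mul, h2] using h1
  exact ⟨hanti, hconv, hconv.continuousOn isOpen_Ioi⟩
end

section
/- Let f : [a,b] → ℝ be càdlàg with T_D^c f ≥ T_U^c f, where T_U^c f = inf{s ≥ a : f(s) − inf_{t∈[a,s]} f(t) ≥ c} and T_D^c f = inf{s ≥ a : sup_{t∈[a,s]} f(t) − f(s) ≥ c}. Then UTV^c(f,[a,s]) = 0 for all s ∈ [a, T_U^c f) ∩ [a,b]. -/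
open Set Filter

/-- A càdlàg function is bounded below on `[a, b]`. -/
lemma cadlag_bddBelow (f : ℝ → ℝ) (a b : ℝ) (hf : Cadlag f a b) :
    BddBelow (f '' Set.Icc a b) := by
  apply isCompact_Icc.induction_on (p := fun s => BddBelow (f '' s))
  · simp
  · intro s t hst h; exact h.mono (image_mono (f := f) hst)
  · intro s t hs ht; rw [image_union]; exact hs.union ht
  · intro x hx
    suffices h : ∃ M, ∀ᶠ y in nhdsWithin x (Icc a b), M ≤ f y by
      obtain ⟨M, hM⟩ := h
      exact ⟨{y | M ≤ f y}, hM, M, by rintro _ ⟨y, hy, rfl⟩; exact hy⟩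
    obtain ⟨M₁, hM₁⟩ : ∃ M₁, ∀ᶠ y in nhdsWithin x (Iio x ∩ Icc a b), M₁ ≤ f y := by
      rcases eq_or_lt_of_le hx.1 with h | h
      · refine ⟨0, ?_⟩
        have : Iio x ∩ Icc a b = (∅ : Set ℝ) := by
          ext y; simp only [mem_inter_iff, mem_Iio, mem_Icc, mem_empty_iff_false, iff_false]
          rintro ⟨h1, h2, _⟩; subst h; linarith
        rw [this, nhdsWithin_empty]; exact eventually_bot
      · obtain ⟨l, hl⟩ := hf.2 x ⟨h, hx.2⟩
        refine ⟨l - 1, ?_⟩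
        have := hl.eventually (eventually_ge_nhds (show l - 1 < l by linarith))
        exact (this.filter_mono (nhdsWithin_mono x inter_subset_left))
    obtain ⟨M₂, hM₂⟩ : ∃ M₂, ∀ᶠ y in nhdsWithin x (Ioi x ∩ Icc a b), M₂ ≤ f y := by
      rcases eq_or_lt_of_le hx.2 with h | h
      · refine ⟨0, ?_⟩
        have : Ioi x ∩ Icc a b = (∅ : Set ℝ) := by
          ext y; simp only [mem_inter_iff, mem_Ioi, mem_Icc, mem_empty_iff_false, iff_false]
          rintro ⟨h1, _, h2⟩; subst h; linarith
        rw [this, nhdsWithin_empty]; exact eventually_bot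
      · have hl := hf.1 x ⟨hx.1, h⟩
        refine ⟨f x - 1, ?_⟩
        have := hl.eventually (eventually_ge_nhds (show f x - 1 < f x by linarith))
        exact (this.filter_mono (nhdsWithin_mono x inter_subset_left))
    have hset : Icc a b = (Iio x ∩ Icc a b) ∪ ({x} ∪ (Ioi x ∩ Icc a b)) := by
      ext y
      simp only [mem_union, mem_inter_iff, mem_singleton_iff, mem_Iio, mem_Ioi]
      constructor
      · intro hy; rcases lt_trichotomy y x with h | h | h
        · exact Or.inl ⟨h, hy⟩
        · exact Or.inr (Or.inl h)
        · exact Or.inr (Or.inr ⟨h, hy⟩)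
      · rintro (⟨_, hy⟩ | rfl | ⟨_, hy⟩)
        · exact hy
        · exact hx
        · exact hy
    have hfil : nhdsWithin x (Icc a b) =
        nhdsWithin x (Iio x ∩ Icc a b) ⊔ (pure x ⊔ nhdsWithin x (Ioi x ∩ Icc a b)) := by
      conv_lhs => rw [hset]
      rw [nhdsWithin_union, nhdsWithin_union, nhdsWithin_singleton]
    refine ⟨min M₁ (min M₂ (f x)), ?_⟩
    rw [hfil, eventually_sup, eventually_sup, eventually_pure]
    refine ⟨hM₁.mono fun y hy => le_trans (min_le_left _ _) hy,
      le_trans (le_trans (min_le_right _ _) (min_le_right _ _)) le_rfl,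
      hM₂.mono fun y hy => le_trans (le_trans (min_le_right _ _) (min_le_left _ _)) hy⟩

/-- If the first downward crossing of size `c` occurs no earlier than the
first upward crossing (every downward-crossing point is preceded by an upward-crossing
point), then `UTV^c(f,[a,s]) = 0` for every `s` before the first upward crossing. -/
theorem utvc_zero_before_first_upcrossing (a b : ℝ) (hab : a < b) (f : ℝ → ℝ)
    (hf : Cadlag f a b) (c : ℝ) (hc : 0 < c)
    (hUD : ∀ s ∈ {r ∈ Set.Icc a b | c ≤ sSup (f '' Set.Icc a r) - f r},
      ∃ u ∈ {r ∈ Set.Icc a b | c ≤ f r - sInf (f '' Set.Icc a r)}, u ≤ s) :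
    ∀ s ∈ Set.Icc a b,
      (∀ u ∈ {r ∈ Set.Icc a b | c ≤ f r - sInf (f '' Set.Icc a r)}, s < u) →
      UTVc f c a s = 0 := by
  have hbdd : BddBelow (f '' Set.Icc a b) := cadlag_bddBelow f a b hf
  intro s hs hsu
  rw [UTVc]
  simp only [ENNReal.iSup_eq_zero]
  intro n t ht
  apply Finset.sum_eq_zero
  intro i hi
  rw [Finset.mem_range] at hi
  rw [ENNReal.ofReal_eq_zero]
  by_contra hpos
  push_neg at hpos
  obtain ⟨h0, hn, hmono⟩ := ht
  have mono : ∀ j ≤ n, ∀ k ≤ j, t k ≤ t j := by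
    intro j
    induction j with
    | zero => intro _ k hk; rw [Nat.le_zero.mp hk]
    | succ m ih =>
      intro hj k hk
      rcases eq_or_lt_of_le hk with h | h
      · rw [h]
      · exact le_trans (ih (by omega) k (by omega)) (hmono m (by omega)).le
  have hti : a ≤ t i := le_trans h0 (mono i (by omega) 0 (by omega))
  have hrs : t (i + 1) ≤ s := le_trans (mono n le_rfl (i + 1) hi) hn
  have hrb : t (i + 1) ≤ b := le_trans hrs hs.2
  have har : a ≤ t (i + 1) := le_trans hti (hmono i hi).le
  have hb' : BddBelow (f '' Set.Icc a (t (i + 1))) :=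
    hbdd.mono (image_mono (f := f) (Icc_subset_Icc_right hrb))
  have hinf : sInf (f '' Set.Icc a (t (i + 1))) ≤ f (t i) :=
    csInf_le hb' ⟨t i, ⟨hti, (hmono i hi).le⟩, rfl⟩
  have hcr : c ≤ f (t (i + 1)) - sInf (f '' Set.Icc a (t (i + 1))) := by linarith
  have := hsu (t (i + 1)) ⟨⟨har, hrb⟩, hcr⟩
  linarith
end
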